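/- arXiv:2501.17738 — 8 statements merged into one kernel-verified Lean document; each statement's English description precedes it below -/
import Mathlib

section
/- Let M be a matroid on a nonempty finite ground set E having no loops and no coloops, and let b be a basis of M. Then the collection B(M) \ {b} is the collection of bases of a matroid on E if and only if for every p ∈ E \ b and every q ∈ b, the set (b \ {q}) ∪ {p} is a basis of M. -/
open Matroid

variable {α : Type*}

/-- Let `M` be a matroid on a nonempty finite ground set without loops (every
element lies in some basis) and without coloops (every element is outside some
basis), and let `b` be a basis of `M`. Then the bases of `M` other than `b` form
the collection of bases of a matroid on the same ground set iff every set of the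
form `(b \ {q}) ∪ {p}` with `p ∈ E \ b` and `q ∈ b` is a basis of `M`. -/
theorem stmt2 (M : Matroid α) (hE : M.E.Finite) (hEne : M.E.Nonempty)
    (hloop : ∀ e ∈ M.E, ∃ B, M.IsBase B ∧ e ∈ B)
    (hcoloop : ∀ e ∈ M.E, ∃ B, M.IsBase B ∧ e ∉ B)
    (b : Set α) (hb : M.IsBase b) :
    (∃ N : Matroid α, N.E = M.E ∧ ∀ B : Set α, N.IsBase B ↔ M.IsBase B ∧ B ≠ b) ↔
      (∀ p ∈ M.E \ b, ∀ q ∈ b, M.IsBase (insert p (b \ {q}))) := by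
  have hbE : b ⊆ M.E := hb.subset_ground
  have hbfin : b.Finite := hE.subset hbE
  constructor
  · rintro ⟨N, hNE, hNB⟩ p hp q hq
    obtain ⟨hpE, hpb⟩ := hp
    by_contra hX
    -- a base avoiding q
    obtain ⟨B₂, hB₂, hqB₂⟩ := hcoloop q (hbE hq)
    obtain ⟨B', hB', hIB', hB'sub⟩ :=
      (hb.indep.subset (Set.diff_subset : b \ {q} ⊆ b)).exists_isBase_subset_union_isBase hB₂
    have hB'ne : B' ≠ b := by
      rintro rfl
      exact (hB'sub hq).elim (fun h => h.2 rfl) hqB₂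
    have hIN : N.Indep (b \ {q}) := (((hNB B').mpr ⟨hB', hB'ne⟩).indep).subset hIB'
    -- a base containing p inside `insert p b`
    obtain ⟨Bp, hBp, hpBp⟩ := hloop p hpE
    obtain ⟨B₃, hB₃, hpB₃, hB₃sub⟩ :=
      (hBp.indep.subset (Set.singleton_subset_iff.mpr hpBp)).exists_isBase_subset_union_isBase hb
    have hpB₃' : p ∈ B₃ := hpB₃ rfl
    have hB₃ne : B₃ ≠ b := fun h => hpb (h ▸ hpB₃')
    have hB₃N : N.IsBase B₃ := (hNB B₃).mpr ⟨hB₃, hB₃ne⟩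
    have hXE : insert p b ⊆ N.E := by rw [hNE]; exact Set.insert_subset hpE hbE
    -- `b` is N-dependent
    have hbdepN : ¬ N.Indep b := by
      intro h
      obtain ⟨B, hBN, hbB⟩ := h.exists_isBase_superset
      obtain ⟨hBM, hBne⟩ := (hNB B).mp hBN
      exact hBne (hb.eq_of_subset_isBase hBM hbB).symm
    -- `insert p (b \ {q})` is N-dependent
    have hXdepN : ¬ N.Indep (insert p (b \ {q})) := by
      intro h
      obtain ⟨B, hBN, hXB⟩ := h.exists_isBase_superset
      obtain ⟨hBM, hBne⟩ := (hNB B).mp hBN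
      have hcard : B.encard = (insert p (b \ {q})).encard := by
        rw [hBM.encard_eq_encard_of_isBase hb,
          Set.encard_insert_of_notMem (fun hc => hpb hc.1),
          Set.encard_diff_singleton_add_one hq]
      have : insert p (b \ {q}) = B :=
        Set.Finite.eq_of_subset_of_encard_le ((hbfin.diff (t := {q})).insert p) hXB hcard.le
      exact hX (this ▸ hBM)
    -- `b \ {q}` is an N-basis of `insert p b`
    obtain ⟨J, hJ, hJsub⟩ := hIN.subset_isBasis_of_subset
      ((Set.diff_subset.trans (Set.subset_insert p b))) hXE
    have hJeq : J = b \ {q} := by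
      refine Set.Subset.antisymm (fun x hx => ?_) hJsub
      by_contra hxn
      rcases hJ.subset hx with rfl | hxb
      · exact hXdepN (hJ.indep.subset (Set.insert_subset hx hJsub))
      · have hxq : x = q := by
          by_contra hne
          exact hxn ⟨hxb, hne⟩
        subst hxq
        refine hbdepN (hJ.indep.subset ?_)
        intro y hy
        by_cases hyq : y = x
        · exact hyq ▸ hx
        · exact hJsub ⟨hy, hyq⟩
    -- extend B₃ to an N-basis of `insert p b`; contradiction on cardinalities
    have hB₃sub' : B₃ ⊆ insert p b := by
      rw [← Set.singleton_union]; exact hB₃sub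
    obtain ⟨J', hJ', hB₃J'⟩ := hB₃N.indep.subset_isBasis_of_subset hB₃sub' hXE
    have hcard2 : J.encard = J'.encard := hJ.encard_eq_encard hJ'
    have hlt : (b \ {q}).encard < b.encard := by
      exact (hbfin.diff (t := {q})).encard_lt_encard (Set.sdiff_singleton_ssubset.mpr hq)
    have hge : b.encard ≤ J'.encard := by
      rw [hb.encard_eq_encard_of_isBase hB₃]
      exact Set.encard_mono hB₃J'
    rw [hJeq] at hcard2
    exact absurd (hcard2 ▸ hge) (not_le.mpr hlt)
  · intro hexch
    have hbne : b.Nonempty := by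
      obtain ⟨e, heE⟩ := hEne
      obtain ⟨B, hB, heB⟩ := hloop e heE
      rcases b.eq_empty_or_nonempty with h | h
      · subst h
        have : B.encard = (∅ : Set α).encard := hB.encard_eq_encard_of_isBase hb
        rw [Set.encard_empty, Set.encard_eq_zero] at this
        exact absurd (this ▸ heB) (Set.notMem_empty e)
      · exact h
    obtain ⟨q0, hq0⟩ := hbne
    have hEb : ∃ p, p ∈ M.E \ b := by
      by_contra h
      push_neg at h
      have hEb' : M.E ⊆ b := fun e he => by
        by_contra hn; exact h e ⟨he, hn⟩
      obtain ⟨B, hB, hq0B⟩ := hcoloop q0 (hbE hq0)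
      have hBb : B = b := hB.eq_of_subset_isBase hb (hB.subset_ground.trans hEb')
      exact hq0B (hBb ▸ hq0)
    obtain ⟨p0, hp0⟩ := hEb
    have hex : ∃ B, M.IsBase B ∧ B ≠ b := by
      refine ⟨insert p0 (b \ {q0}), hexch p0 hp0 q0 hq0, fun h => ?_⟩
      exact hp0.2 (h ▸ Set.mem_insert p0 _)
    have hxch : Matroid.ExchangeProperty (fun B => M.IsBase B ∧ B ≠ b) := by
      rintro B₁ B₂ ⟨hB₁, hB₁ne⟩ ⟨hB₂, hB₂ne⟩ x hx
      obtain ⟨y, hy, hBy⟩ := hB₁.exchange hB₂ hx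
      by_cases hcase : insert y (B₁ \ {x}) = b
      · have hyx : y ≠ x := fun h => hy.2 (h ▸ hx.1)
        have hxb : x ∉ b := by
          rw [← hcase]
          rintro (h | h)
          · exact hyx h.symm
          · exact h.2 rfl
        have hyb : y ∈ b := hcase ▸ Set.mem_insert y _
        have hkey : b \ {y} = B₁ \ {x} := by
          rw [← hcase, Set.insert_sdiff_self_of_notMem (fun h => hy.2 h.1)]
        obtain ⟨z, hzB₂, hzb⟩ : ∃ z ∈ B₂, z ∉ b := by
          by_contra h
          push_neg at h
          exact hB₂ne (hB₂.eq_of_subset_isBase hb h)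
        have hzB₁ : z ∉ B₁ := by
          intro hzB₁
          have hz : z ∈ B₁ \ {x} := ⟨hzB₁, fun h => hx.2 (h ▸ hzB₂)⟩
          rw [← hkey] at hz
          exact hzb hz.1
        have hbase : M.IsBase (insert z (b \ {y})) :=
          hexch z ⟨hB₂.subset_ground hzB₂, hzb⟩ y hyb
        rw [hkey] at hbase
        exact ⟨z, ⟨hzB₂, hzB₁⟩, hbase, fun h => hzb (h ▸ Set.mem_insert z _)⟩
      · exact ⟨y, hy, hBy, hcase⟩
    exact ⟨Matroid.ofIsBaseOfFinite hE (fun B => M.IsBase B ∧ B ≠ b) hex hxch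
      (fun B hB => hB.1.subset_ground), rfl, fun B => by simp⟩
end

section
/- Let M be a matroid on a finite ground set E and let b be a basis of M such that the collection B(M) \ {b} is the collection of bases of a matroid M_b on E. Suppose B₁, B₂, B₁', B₂'' are bases of M_b and B₂' is a basis of M such that the multiset {b, B₂'} is obtained from {B₁, B₂} by a single symmetric exchange step in M, and {B₁', B₂''} is obtained from {b, B₂'} by a single symmetric exchange step in M. Then the multiset {B₁', B₂''} can be obtained from {B₁, B₂} by a finite sequence of symmetric exchange steps in M_b. -/
open Matroid

variable {α : Type*}

/-- `T` is obtained from `S` by a single symmetric exchange step in the matroid `M`: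
`S = S₀ + {B₁, B₂}` and `T = S₀ + {B₁', B₂'}` where `S₀` is a multiset of bases,
`B₁, B₂` are bases, and `B₁' = (B₁ \ {e}) ∪ {f}`, `B₂' = (B₂ \ {f}) ∪ {e}` are bases
for some `e ∈ B₁ \ B₂` and `f ∈ B₂ \ B₁`. -/
def SymExchStep [DecidableEq α] (M : Matroid α) (S T : Multiset (Finset α)) : Prop :=
  ∃ (S₀ : Multiset (Finset α)) (B₁ B₂ : Finset α) (e f : α),
    (∀ B ∈ S₀, M.IsBase (B : Set α)) ∧
    M.IsBase (B₁ : Set α) ∧ M.IsBase (B₂ : Set α) ∧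
    e ∈ B₁ \ B₂ ∧ f ∈ B₂ \ B₁ ∧
    M.IsBase ((insert f (B₁.erase e) : Finset α) : Set α) ∧
    M.IsBase ((insert e (B₂.erase f) : Finset α) : Set α) ∧
    S = B₁ ::ₘ B₂ ::ₘ S₀ ∧
    T = insert f (B₁.erase e) ::ₘ insert e (B₂.erase f) ::ₘ S₀

/-- `M` satisfies the strong White condition: any two multisets of bases of `M`
with equal element multiset sums are connected by a finite sequence of
symmetric exchange steps. -/
def StrongWhite [DecidableEq α] (M : Matroid α) : Prop :=
  ∀ S T : Multiset (Finset α),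
    (∀ B ∈ S, M.IsBase (B : Set α)) → (∀ B ∈ T, M.IsBase (B : Set α)) →
    (S.map Finset.val).sum = (T.map Finset.val).sum →
    Relation.ReflTransGen (SymExchStep M) S T

section Aux

variable [DecidableEq α]

/-- Equality of pair multisets. -/
lemma pair_multiset_eq {a b c d : Finset α}
    (h : ({a, b} : Multiset (Finset α)) = {c, d}) :
    (a = c ∧ b = d) ∨ (a = d ∧ b = c) := by
  have h' : (a ::ₘ {b} : Multiset (Finset α)) = c ::ₘ {d} := h
  rcases Multiset.cons_eq_cons.1 h' with ⟨rfl, hs⟩ | ⟨hne, cs, h1, h2⟩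
  · exact Or.inl ⟨rfl, by simpa using hs⟩
  · have hcs : cs = 0 := by
      have := congrArg Multiset.card h1
      simp only [Multiset.card_cons, Multiset.card_singleton] at this
      exact Multiset.card_eq_zero.1 (by omega)
    subst hcs
    simp only [Multiset.cons_zero] at h1 h2
    exact Or.inr ⟨by simpa using h2.symm, by simpa using h1⟩

/-- Extraction of the data of a symmetric exchange step between pairs. -/
lemma step_pair {M : Matroid α} {A B C D : Finset α}
    (h : SymExchStep M {A, B} {C, D}) :
    ∃ e f, e ∈ A \ B ∧ f ∈ B \ A ∧
      ((C = insert f (A.erase e) ∧ D = insert e (B.erase f)) ∨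
       (D = insert f (A.erase e) ∧ C = insert e (B.erase f))) := by
  obtain ⟨S₀, P₁, P₂, e, f, -, -, -, he, hf, -, -, hS, hT⟩ := h
  have hS₀ : S₀ = 0 := by
    have hcard := congrArg Multiset.card hS
    simp only [Multiset.card_cons] at hcard
    have h2 : ({A, B} : Multiset (Finset α)).card = 2 := rfl
    rw [h2] at hcard
    exact Multiset.card_eq_zero.1 (by omega)
  subst hS₀
  have hS' : ({A, B} : Multiset (Finset α)) = {P₁, P₂} := hS
  have hT' : ({C, D} : Multiset (Finset α))
      = {insert f (P₁.erase e), insert e (P₂.erase f)} := hT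
  rcases pair_multiset_eq hS' with ⟨rfl, rfl⟩ | ⟨rfl, rfl⟩
  · refine ⟨e, f, he, hf, ?_⟩
    rcases pair_multiset_eq hT' with ⟨h1, h2⟩ | ⟨h1, h2⟩
    · exact Or.inl ⟨h1, h2⟩
    · exact Or.inr ⟨h2, h1⟩
  · refine ⟨f, e, hf, he, ?_⟩
    rcases pair_multiset_eq hT' with ⟨h1, h2⟩ | ⟨h1, h2⟩
    · exact Or.inr ⟨h2, h1⟩
    · exact Or.inl ⟨h1, h2⟩

/-- Freebie: if `Mb` is the matroid obtained by deleting the basis `b` from `M`,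
then every single exchange `b - w + x` with `w ∈ b \ B₂'`, `x ∈ B₂' \ b` is a basis of `M`,
where `B₂'` is any basis of `M`. -/
lemma freebie {M Mb : Matroid α} {b B₂' : Finset α}
    (hb : M.IsBase (b : Set α)) (hB₂' : M.IsBase (B₂' : Set α))
    (hMbE : Mb.E = M.E)
    (hMbB : ∀ B : Set α, Mb.IsBase B ↔ M.IsBase B ∧ B ≠ (b : Set α))
    {w x : α} (hw : w ∈ b \ B₂') (hx : x ∈ B₂' \ b) :
    M.IsBase ((insert x (b.erase w) : Finset α) : Set α) := by
  obtain ⟨hwb, hwB⟩ := Finset.mem_sdiff.1 hw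
  obtain ⟨hxB, hxb⟩ := Finset.mem_sdiff.1 hx
  have hbpos : 0 < b.card := Finset.card_pos.2 ⟨w, hwb⟩
  set K : Set α := (b : Set α) \ {w} with hK
  have hKi : M.Indep K := hb.indep.subset Set.diff_subset
  obtain ⟨B₃, hB₃, hKB₃, hB₃sub⟩ := hKi.exists_isBase_subset_union_isBase hB₂'
  have hB₃ne : B₃ ≠ (b : Set α) := by
    intro hcon
    have hwB₃ : w ∈ B₃ := by rw [hcon]; exact_mod_cast hwb
    rcases hB₃sub hwB₃ with h' | h'
    · exact h'.2 rfl
    · exact hwB (by exact_mod_cast h')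
  have hB₃Mb : Mb.IsBase B₃ := (hMbB B₃).2 ⟨hB₃, hB₃ne⟩
  have hKMb : Mb.Indep K := hB₃Mb.indep.subset hKB₃
  have hxE : x ∈ Mb.E := by
    rw [hMbE]; exact hB₂'.subset_ground (by exact_mod_cast hxB)
  have hxcl : x ∉ Mb.closure (b : Set α) := by
    intro hxcl
    have hxi : M.Indep {x} := hB₂'.indep.subset (by
      simp only [Set.singleton_subset_iff]; exact_mod_cast hxB)
    obtain ⟨B₅, hB₅, hxB₅, hB₅sub⟩ := hxi.exists_isBase_subset_union_isBase hb
    have hB₅ne : B₅ ≠ (b : Set α) := by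
      intro hcon
      exact hxb (by exact_mod_cast hcon ▸ hxB₅ rfl)
    have hB₅Mb : Mb.IsBase B₅ := (hMbB B₅).2 ⟨hB₅, hB₅ne⟩
    have hbE : (b : Set α) ⊆ Mb.E := hMbE ▸ hb.subset_ground
    have hsub : B₅ ⊆ Mb.closure (b : Set α) := by
      intro y hy
      rcases hB₅sub hy with h' | h'
      · exact (Set.mem_singleton_iff.1 h') ▸ hxcl
      · exact Mb.subset_closure (b : Set α) hbE h'
    have hspan : Mb.closure (b : Set α) = Mb.E := by
      refine subset_antisymm (Mb.closure_subset_ground _) ?_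
      calc Mb.E = Mb.closure B₅ := hB₅Mb.closure_eq.symm
        _ ⊆ Mb.closure (Mb.closure (b : Set α)) := Mb.closure_subset_closure hsub
        _ = Mb.closure (b : Set α) := Mb.closure_closure _
    obtain ⟨B₆, hB₆, hB₆sub⟩ := (Matroid.Spanning.mk hspan hbE).exists_isBase_subset
    have hB₆M : M.IsBase B₆ := ((hMbB B₆).1 hB₆).1
    exact ((hMbB B₆).1 hB₆).2 (hB₆M.eq_of_subset_isBase hb hB₆sub)
  have hxK : x ∉ Mb.closure K :=
    fun hx' => hxcl (Mb.closure_subset_closure Set.diff_subset hx')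
  have hIns : Mb.Indep (insert x K) := by
    rw [hKMb.insert_indep_iff_of_notMem (by simp [hK, hxb])]
    exact ⟨hxE, hxK⟩
  obtain ⟨B₇, hB₇, hsub7⟩ := hIns.exists_isBase_superset
  have hB₇M : M.IsBase B₇ := ((hMbB B₇).1 hB₇).1
  have hcoe : insert x K = ((insert x (b.erase w) : Finset α) : Set α) := by
    simp [hK]
  have hinscard : (insert x (b.erase w)).card = b.card := by
    rw [Finset.card_insert_of_notMem (by simp [hxb]), Finset.card_erase_of_mem hwb]
    omega
  have h7card : B₇.ncard = b.card := by
    rw [hB₇M.ncard_eq_ncard_of_isBase hb, Set.ncard_coe_finset]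
  have hfin : B₇.Finite := hb.finite_of_finite b.finite_toSet hB₇M
  have heq : insert x K = B₇ := by
    refine Set.eq_of_subset_of_ncard_le hsub7 ?_ hfin
    rw [hcoe, Set.ncard_coe_finset, hinscard, h7card]
  rw [← hcoe, heq]
  exact hB₇M

/-- If all exchanges of `w` into the basis `B₂'` at positions in `S` fail,
then `w` is in the closure of `B₂' \ S`. -/
lemma row_closure {M : Matroid α} {B₂' : Finset α} (hB₂' : M.IsBase (B₂' : Set α))
    {w : α} (hwE : w ∈ M.E) (hwB : w ∉ B₂') {S : Finset α} (hS : S ⊆ B₂')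
    (hno : ∀ x ∈ S, ¬ M.IsBase ((insert w (B₂'.erase x) : Finset α) : Set α)) :
    w ∈ M.closure ((B₂' : Set α) \ (S : Set α)) := by
  by_contra hwcl
  have hKi : M.Indep ((B₂' : Set α) \ (S : Set α)) := hB₂'.indep.subset Set.diff_subset
  have hIns : M.Indep (insert w ((B₂' : Set α) \ (S : Set α))) := by
    rw [hKi.insert_indep_iff_of_notMem (fun h => hwB (by exact_mod_cast h.1))]
    exact ⟨hwE, hwcl⟩
  obtain ⟨B', hB', hsub1, hsub2⟩ := hIns.exists_isBase_subset_union_isBase hB₂'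
  have hwB' : w ∈ B' := hsub1 (Set.mem_insert w _)
  have hsub2' : B' ⊆ insert w (B₂' : Set α) := by
    intro y hy
    rcases hsub2 hy with h' | h'
    · rcases Set.mem_insert_iff.1 h' with h'' | h''
      · rw [h'']; exact Set.mem_insert _ _
      · exact Set.mem_insert_of_mem _ h''.1
    · exact Set.mem_insert_of_mem _ h'
  obtain ⟨x₀, hx₀B, hx₀B'⟩ : ∃ x₀, x₀ ∈ (B₂' : Set α) ∧ x₀ ∉ B' := by
    by_contra hcon
    push_neg at hcon
    have : (B₂' : Set α) = B' := hB₂'.eq_of_subset_isBase hB' hcon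
    exact hwB (by exact_mod_cast this ▸ hwB')
  have hx₀S : x₀ ∈ S := by
    by_contra hcon
    exact hx₀B' (hsub1 (Set.mem_insert_of_mem _ ⟨hx₀B, by exact_mod_cast hcon⟩))
  have hx₀w : x₀ ≠ w := by
    intro hcon; exact hwB (by exact_mod_cast hcon ▸ hx₀B)
  have hBsub : B' ⊆ ((insert w (B₂'.erase x₀) : Finset α) : Set α) := by
    intro y hy
    rcases hsub2' hy with h' | h'
    · simp [h']
    · have hyx : y ≠ x₀ := fun hcon => hx₀B' (hcon ▸ hy)
      simp only [Finset.coe_insert, Finset.coe_erase, Set.mem_insert_iff, Set.mem_diff,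
        Set.mem_singleton_iff]
      exact Or.inr ⟨h', hyx⟩
  have hBpos : 0 < B₂'.card := Finset.card_pos.2 ⟨x₀, by exact_mod_cast hx₀B⟩
  have hcards : ((insert w (B₂'.erase x₀) : Finset α) : Set α).ncard ≤ B'.ncard := by
    rw [Set.ncard_coe_finset, hB'.ncard_eq_ncard_of_isBase hB₂', Set.ncard_coe_finset,
      Finset.card_insert_of_notMem (by simp [hwB]),
      Finset.card_erase_of_mem (by exact_mod_cast hx₀B)]
    omega
  have heq : B' = ((insert w (B₂'.erase x₀) : Finset α) : Set α) :=
    Set.eq_of_subset_of_ncard_le hBsub hcards (Finset.finite_toSet _)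
  exact hno x₀ hx₀S (heq ▸ hB')

/-- A basis cannot be contained in the closure of a set smaller than the rank. -/
lemma span_contra {M : Matroid α} {b : Finset α} (hb : M.IsBase (b : Set α))
    {Bs : Set α} (hBs : M.IsBase Bs)
    {Z : Finset α} (hZE : (Z : Set α) ⊆ M.E) (hsub : Bs ⊆ M.closure (Z : Set α))
    (hcard : Z.card < b.card) : False := by
  obtain ⟨J, hJ⟩ := M.exists_isBasis (Z : Set α) hZE
  have h1 : Bs ⊆ M.closure J := hJ.closure_eq_closure ▸ hsub
  have hspan : M.closure J = M.E := by
    refine subset_antisymm (M.closure_subset_ground _) ?_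
    calc M.E = M.closure Bs := hBs.closure_eq.symm
      _ ⊆ M.closure (M.closure J) := M.closure_subset_closure h1
      _ = M.closure J := M.closure_closure _
  have hJbase : M.IsBase J := hJ.indep.isBase_of_spanning ⟨hspan, hJ.indep.subset_ground⟩
  have hJb : J.ncard = b.card := by
    rw [hJbase.ncard_eq_ncard_of_isBase hb, Set.ncard_coe_finset]
  have hle : J.ncard ≤ Z.card := by
    rw [← Set.ncard_coe_finset]
    exact Set.ncard_le_ncard hJ.subset (Finset.finite_toSet Z)
  omega

/-- The core lemma: the conjugate-pair walk. -/
lemma core {M Mb : Matroid α} {b B₂' : Finset α}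
    (hb : M.IsBase (b : Set α)) (hB₂' : M.IsBase (B₂' : Set α))
    (hMbE : Mb.E = M.E)
    (hMbB : ∀ B : Set α, Mb.IsBase B ↔ M.IsBase B ∧ B ≠ (b : Set α))
    {f e g h : α} (hf : f ∈ b \ B₂') (he : e ∈ B₂' \ b)
    (hg : g ∈ b \ B₂') (hh : h ∈ B₂' \ b)
    (hB₂ : M.IsBase ((insert f (B₂'.erase e) : Finset α) : Set α))
    (hB₂'' : M.IsBase ((insert g (B₂'.erase h) : Finset α) : Set α)) :
    Relation.ReflTransGen (SymExchStep Mb)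
      {insert e (b.erase f), insert f (B₂'.erase e)}
      {insert h (b.erase g), insert g (B₂'.erase h)} := by
  classical
  by_cases htriv : f = g ∧ e = h
  · obtain ⟨rfl, rfl⟩ := htriv; exact Relation.ReflTransGen.refl
  have hbcard : b.card = B₂'.card := by
    have := hb.ncard_eq_ncard_of_isBase hB₂'
    simpa [Set.ncard_coe_finset] using this
  have hcard2 : 1 < (B₂' \ b).card := by
    rcases not_and_or.1 htriv with hne | hne
    · have h2 : 1 < (b \ B₂').card := Finset.one_lt_card.2 ⟨f, hf, g, hg, hne⟩
      rwa [Finset.card_sdiff_comm hbcard] at h2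
    · exact Finset.one_lt_card.2 ⟨e, he, h, hh, hne⟩
  -- the A2 sets are never equal to b
  have hA2ne : ∀ w x, w ∈ b \ B₂' → x ∈ B₂' \ b →
      ((insert w (B₂'.erase x) : Finset α) : Set α) ≠ (b : Set α) := by
    intro w x hw hx hcon
    obtain ⟨y, hy, hyx⟩ := Finset.exists_mem_ne hcard2 x
    obtain ⟨hyB, hyb⟩ := Finset.mem_sdiff.1 hy
    have hy1 : y ∈ insert w (B₂'.erase x) :=
      Finset.mem_insert_of_mem (Finset.mem_erase.2 ⟨hyx, hyB⟩)
    have : y ∈ (b : Set α) := hcon ▸ (by exact_mod_cast hy1)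
    exact hyb (by exact_mod_cast this)
  -- the A1 sets are Mb-bases
  have hA1 : ∀ w x, w ∈ b \ B₂' → x ∈ B₂' \ b →
      Mb.IsBase ((insert x (b.erase w) : Finset α) : Set α) := by
    intro w x hw hx
    refine (hMbB _).2 ⟨freebie hb hB₂' hMbE hMbB hw hx, ?_⟩
    intro hcon
    have hxmem : x ∈ (b : Set α) := hcon ▸ (by
      exact_mod_cast Finset.mem_insert_self x (b.erase w))
    exact (Finset.mem_sdiff.1 hx).2 (by exact_mod_cast hxmem)
  have hA2 : ∀ w x, w ∈ b \ B₂' → x ∈ B₂' \ b →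
      M.IsBase ((insert w (B₂'.erase x) : Finset α) : Set α) →
      Mb.IsBase ((insert w (B₂'.erase x) : Finset α) : Set α) :=
    fun w x hw hx hM => (hMbB _).2 ⟨hM, hA2ne w x hw hx⟩
  -- the good predicate and the grid relation
  set Good : α → α → Prop := fun w x => w ∈ b \ B₂' ∧ x ∈ B₂' \ b ∧
      M.IsBase ((insert w (B₂'.erase x) : Finset α) : Set α) with hGoodDef
  set GR : α × α → α × α → Prop := fun p q =>
    Good p.1 p.2 ∧ Good q.1 q.2 ∧
      ((p.1 = q.1 ∧ p.2 ≠ q.2) ∨ (p.2 = q.2 ∧ p.1 ≠ q.1)) with hGRdef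
  have hins_comm : ∀ (a c : α) (s : Finset α), insert a (insert c s) = insert c (insert a s) :=
    fun a c s => by ext y; simp only [Finset.mem_insert]; tauto
  have hers_comm : ∀ (s : Finset α) (a c : α), (s.erase a).erase c = (s.erase c).erase a :=
    fun s a c => by ext y; simp only [Finset.mem_erase]; tauto
  -- a grid move is a symmetric exchange step
  have hstep : ∀ p q : α × α, GR p q →
      SymExchStep Mb {insert p.2 (b.erase p.1), insert p.1 (B₂'.erase p.2)}
        {insert q.2 (b.erase q.1), insert q.1 (B₂'.erase q.2)} := by
    rintro ⟨w, x⟩ ⟨w', x'⟩ ⟨⟨hw, hx, hbase⟩, ⟨hw', hx', hbase'⟩, hmove⟩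
    obtain ⟨hwb, hwB⟩ := Finset.mem_sdiff.1 hw
    obtain ⟨hxB, hxb⟩ := Finset.mem_sdiff.1 hx
    obtain ⟨hw'b, hw'B⟩ := Finset.mem_sdiff.1 hw'
    obtain ⟨hx'B, hx'b⟩ := Finset.mem_sdiff.1 hx'
    rcases hmove with ⟨heq, hne⟩ | ⟨heq, hne⟩
    · -- row move: w = w', x ≠ x'
      subst heq
      simp only at *
      have hid1 : insert x' ((insert x (b.erase w)).erase x) = insert x' (b.erase w) := by
        rw [Finset.erase_insert (by simp [hxb])]
      have hid2 : insert x ((insert w (B₂'.erase x)).erase x') = insert w (B₂'.erase x') := by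
        have hwx' : w ≠ x' := fun hcon => hx'b (hcon ▸ hwb)
        rw [Finset.erase_insert_of_ne hwx', hins_comm,
          hers_comm, Finset.insert_erase (Finset.mem_erase.2 ⟨hne, hxB⟩)]
      refine ⟨0, insert x (b.erase w), insert w (B₂'.erase x), x, x', by simp,
        hA1 w x hw hx, hA2 w x hw hx hbase, ?_, ?_, ?_, ?_, rfl, ?_⟩
      · refine Finset.mem_sdiff.2 ⟨Finset.mem_insert_self _ _, ?_⟩
        simp only [Finset.mem_insert, Finset.mem_erase, not_or]
        exact ⟨fun hcon => hxb (hcon ▸ hwb), fun hcon => hcon.1 rfl⟩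
      · refine Finset.mem_sdiff.2 ⟨Finset.mem_insert_of_mem
          (Finset.mem_erase.2 ⟨fun hcon => hne hcon.symm, hx'B⟩), ?_⟩
        simp only [Finset.mem_insert, Finset.mem_erase, not_or]
        exact ⟨fun hcon => hne hcon.symm, fun hcon => hx'b hcon.2⟩
      · rw [hid1]; exact hA1 w x' hw hx'
      · rw [hid2]; exact hA2 w x' hw hx' hbase'
      · rw [hid1, hid2]; rfl
    · -- column move: x = x', w ≠ w'
      subst heq
      simp only at *
      have hxw' : x ≠ w' := fun hcon => hxb (hcon ▸ hw'b)
      have hid1 : insert w ((insert x (b.erase w)).erase w') = insert x (b.erase w') := by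
        rw [Finset.erase_insert_of_ne hxw', hers_comm, hins_comm,
          Finset.insert_erase (Finset.mem_erase.2 ⟨hne, hwb⟩)]
      have hid2 : insert w' ((insert w (B₂'.erase x)).erase w) = insert w' (B₂'.erase x) := by
        rw [Finset.erase_insert (by simp [hwB])]
      refine ⟨0, insert x (b.erase w), insert w (B₂'.erase x), w', w, by simp,
        hA1 w x hw hx, hA2 w x hw hx hbase, ?_, ?_, ?_, ?_, rfl, ?_⟩
      · refine Finset.mem_sdiff.2 ⟨Finset.mem_insert_of_mem
          (Finset.mem_erase.2 ⟨fun hcon => hne hcon.symm, hw'b⟩), ?_⟩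
        simp only [Finset.mem_insert, Finset.mem_erase, not_or]
        exact ⟨fun hcon => hne hcon.symm, fun hcon => hw'B hcon.2⟩
      · refine Finset.mem_sdiff.2 ⟨Finset.mem_insert_self _ _, ?_⟩
        simp only [Finset.mem_insert, Finset.mem_erase, not_or]
        exact ⟨fun hcon => hxb (hcon ▸ hwb), fun hcon => hcon.1 rfl⟩
      · rw [hid1]; exact hA1 w' x hw' hx'
      · rw [hid2]; exact hA2 w' x hw' hx' hbase'
      · rw [hid1, hid2]; rfl
  -- connectivity of the grid
  suffices hwalk : Relation.ReflTransGen GR (f, e) (g, h) by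
    exact Relation.ReflTransGen.lift (r := GR) (p := SymExchStep Mb)
      (fun p : α × α =>
        ({insert p.2 (b.erase p.1), insert p.1 (B₂'.erase p.2)} : Multiset (Finset α)))
      (fun p q hpq => hstep p q hpq) _ _ hwalk
  by_contra hnot
  set Reach : α × α → Prop := fun p => Relation.ReflTransGen GR (f, e) p with hReachDef
  have hGfe : Good f e := ⟨hf, he, hB₂⟩
  have hGgh : Good g h := ⟨hg, hh, hB₂''⟩
  set R1 : Finset α := (b \ B₂').filter (fun w => ∃ x, Good w x ∧ Reach (w, x)) with hR1def
  set C1 : Finset α := (B₂' \ b).filter (fun x => ∃ w, Good w x ∧ Reach (w, x)) with hC1def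
  have hmem : ∀ {w x}, Good w x → Reach (w, x) → w ∈ R1 ∧ x ∈ C1 := by
    intro w x hG hR
    exact ⟨Finset.mem_filter.2 ⟨hG.1, x, hG, hR⟩, Finset.mem_filter.2 ⟨hG.2.1, w, hG, hR⟩⟩
  have hstepR : ∀ {w x w' x'}, Good w x → Reach (w, x) → Good w' x' →
      (w = w' ∨ x = x') → Reach (w', x') := by
    intro w x w' x' hG hR hG' hor
    by_cases hpq : (w, x) = (w', x')
    · exact hpq ▸ hR
    · refine Relation.ReflTransGen.tail hR ⟨hG, hG', ?_⟩
      rcases hor with rfl | rfl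
      · exact Or.inl ⟨rfl, fun hcon => hpq (congrArg (Prod.mk w) hcon)⟩
      · exact Or.inr ⟨rfl, fun hcon => hpq (congrArg (fun z => (z, x)) hcon)⟩
  have hfe1 : f ∈ R1 ∧ e ∈ C1 := hmem hGfe Relation.ReflTransGen.refl
  have hgR1 : g ∉ R1 := by
    intro hgm
    obtain ⟨-, x', hGx', hRx'⟩ := Finset.mem_filter.1 hgm
    exact hnot (hstepR hGx' hRx' hGgh (Or.inl rfl))
  have hhC1 : h ∉ C1 := by
    intro hhm
    obtain ⟨-, w', hGw', hRw'⟩ := Finset.mem_filter.1 hhm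
    exact hnot (hstepR hGw' hRw' hGgh (Or.inr rfl))
  have hcross1 : ∀ w ∈ R1, ∀ x ∈ B₂' \ b, x ∉ C1 →
      ¬ M.IsBase ((insert w (B₂'.erase x) : Finset α) : Set α) := by
    intro w hwR x hx hxC hbase
    obtain ⟨hwmem, x', hGx', hRx'⟩ := Finset.mem_filter.1 hwR
    have hGwx : Good w x := ⟨hwmem, hx, hbase⟩
    exact hxC (hmem hGwx (hstepR hGx' hRx' hGwx (Or.inl rfl))).2
  have hcross2 : ∀ x ∈ C1, ∀ w ∈ b \ B₂', w ∉ R1 →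
      ¬ M.IsBase ((insert w (B₂'.erase x) : Finset α) : Set α) := by
    intro x hxC w hw hwR hbase
    obtain ⟨hxmem, w', hGw', hRw'⟩ := Finset.mem_filter.1 hxC
    have hGwx : Good w x := ⟨hw, hxmem, hbase⟩
    exact hwR (hmem hGwx (hstepR hGw' hRw' hGwx (Or.inr rfl))).1
  have hR1sub : R1 ⊆ b \ B₂' := Finset.filter_subset _ _
  have hC1sub : C1 ⊆ B₂' \ b := Finset.filter_subset _ _
  have hC1sub' : C1 ⊆ B₂' := hC1sub.trans Finset.sdiff_subset
  rcases le_or_gt R1.card C1.card with hcase | hcase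
  · -- small side contains f; contradict the freebie basis b - f + h
    set Z : Finset α := (B₂' \ C1) ∪ R1.erase f with hZdef
    have hZE : (Z : Set α) ⊆ M.E := by
      intro y hy
      have hy' : y ∈ Z := by exact_mod_cast hy
      rcases Finset.mem_union.1 hy' with h' | h'
      · exact hB₂'.subset_ground (by exact_mod_cast (Finset.mem_sdiff.1 h').1)
      · exact hb.subset_ground
          (by exact_mod_cast (Finset.mem_sdiff.1 (hR1sub (Finset.mem_of_mem_erase h'))).1)
    have hsubcl : ((insert h (b.erase f) : Finset α) : Set α) ⊆ M.closure (Z : Set α) := by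
      intro y hy
      have hy' : y = h ∨ (y ∈ b ∧ y ≠ f) := by
        have hym : y ∈ insert h (b.erase f) := by exact_mod_cast hy
        rcases Finset.mem_insert.1 hym with h' | h'
        · exact Or.inl h'
        · exact Or.inr ⟨Finset.mem_of_mem_erase h', (Finset.mem_erase.1 h').1⟩
      rcases hy' with rfl | ⟨hyb, hyf⟩
      · refine M.subset_closure _ hZE ?_
        exact_mod_cast Finset.mem_union_left _
          (Finset.mem_sdiff.2 ⟨(Finset.mem_sdiff.1 hh).1, hhC1⟩)
      · by_cases hyB : y ∈ B₂'
        · refine M.subset_closure _ hZE ?_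
          exact_mod_cast Finset.mem_union_left _
            (Finset.mem_sdiff.2 ⟨hyB, fun hc => (Finset.mem_sdiff.1 (hC1sub hc)).2 hyb⟩)
        · by_cases hyR : y ∈ R1
          · refine M.subset_closure _ hZE ?_
            exact_mod_cast Finset.mem_union_right _ (Finset.mem_erase.2 ⟨hyf, hyR⟩)
          · have hrc := row_closure hB₂' (hb.subset_ground (by exact_mod_cast hyb)) hyB
              hC1sub' (fun x hx => hcross2 x hx y (Finset.mem_sdiff.2 ⟨hyb, hyB⟩) hyR)
            refine M.closure_subset_closure ?_ hrc
            rw [← Finset.coe_sdiff]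
            exact_mod_cast Finset.subset_union_left
    have hZcard : Z.card < b.card := by
      have h1 : Z.card ≤ (B₂' \ C1).card + (R1.erase f).card := Finset.card_union_le _ _
      rw [Finset.card_sdiff_of_subset hC1sub', Finset.card_erase_of_mem hfe1.1] at h1
      have h1R : 1 ≤ R1.card := Finset.card_pos.2 ⟨f, hfe1.1⟩
      have hC1B : C1.card ≤ B₂'.card := Finset.card_le_card hC1sub'
      omega
    exact span_contra hb (freebie hb hB₂' hMbE hMbB hf hh) hZE hsubcl hZcard
  · -- small side contains g; contradict the freebie basis b - g + e
    set C2 : Finset α := (B₂' \ b) \ C1 with hC2def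
    set R2 : Finset α := (b \ B₂') \ R1 with hR2def
    have hgR2 : g ∈ R2 := Finset.mem_sdiff.2 ⟨hg, hgR1⟩
    have hC2sub : C2 ⊆ B₂' := Finset.sdiff_subset.trans Finset.sdiff_subset
    set Z : Finset α := (B₂' \ C2) ∪ R2.erase g with hZdef
    have hZE : (Z : Set α) ⊆ M.E := by
      intro y hy
      have hy' : y ∈ Z := by exact_mod_cast hy
      rcases Finset.mem_union.1 hy' with h' | h'
      · exact hB₂'.subset_ground (by exact_mod_cast (Finset.mem_sdiff.1 h').1)
      · exact hb.subset_ground (by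
          have := Finset.mem_sdiff.1 (Finset.mem_of_mem_erase h')
          exact_mod_cast (Finset.mem_sdiff.1 this.1).1)
    have hsubcl : ((insert e (b.erase g) : Finset α) : Set α) ⊆ M.closure (Z : Set α) := by
      intro y hy
      have hy' : y = e ∨ (y ∈ b ∧ y ≠ g) := by
        have hym : y ∈ insert e (b.erase g) := by exact_mod_cast hy
        rcases Finset.mem_insert.1 hym with h' | h'
        · exact Or.inl h'
        · exact Or.inr ⟨Finset.mem_of_mem_erase h', (Finset.mem_erase.1 h').1⟩
      rcases hy' with hye | ⟨hyb, hyg⟩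
      · subst hye
        refine M.subset_closure _ hZE ?_
        have heC2 : y ∉ C2 := fun hc => (Finset.mem_sdiff.1 hc).2 hfe1.2
        exact_mod_cast Finset.mem_union_left _
          (Finset.mem_sdiff.2 ⟨(Finset.mem_sdiff.1 he).1, heC2⟩)
      · by_cases hyB : y ∈ B₂'
        · refine M.subset_closure _ hZE ?_
          exact_mod_cast Finset.mem_union_left _
            (Finset.mem_sdiff.2 ⟨hyB, fun hc => (Finset.mem_sdiff.1 (Finset.mem_sdiff.1 hc).1).2 hyb⟩)
        · by_cases hyR2 : y ∈ R2
          · refine M.subset_closure _ hZE ?_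
            exact_mod_cast Finset.mem_union_right _ (Finset.mem_erase.2 ⟨hyg, hyR2⟩)
          · have hyR1 : y ∈ R1 := by
              by_contra hcon
              exact hyR2 (Finset.mem_sdiff.2 ⟨Finset.mem_sdiff.2 ⟨hyb, hyB⟩, hcon⟩)
            have hrc := row_closure hB₂' (hb.subset_ground (by exact_mod_cast hyb)) hyB
              hC2sub (fun x hx => hcross1 y hyR1 x (Finset.mem_sdiff.1 hx).1
                (Finset.mem_sdiff.1 hx).2)
            refine M.closure_subset_closure ?_ hrc
            rw [← Finset.coe_sdiff]
            exact_mod_cast Finset.subset_union_left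
    have hZcard : Z.card < b.card := by
      have h1 : Z.card ≤ (B₂' \ C2).card + (R2.erase g).card := Finset.card_union_le _ _
      rw [Finset.card_sdiff_of_subset hC2sub, Finset.card_erase_of_mem hgR2] at h1
      have h2 : C2.card = (B₂' \ b).card - C1.card := by
        rw [hC2def, Finset.card_sdiff_of_subset hC1sub]
      have h3 : R2.card = (b \ B₂').card - R1.card := by
        rw [hR2def, Finset.card_sdiff_of_subset hR1sub]
      have h4 : (b \ B₂').card = (B₂' \ b).card := Finset.card_sdiff_comm hbcard
      have h5 : R1.card ≤ (b \ B₂').card := Finset.card_le_card hR1sub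
      have h6 : C1.card ≤ (B₂' \ b).card := Finset.card_le_card hC1sub
      have h7 : (B₂' \ b).card ≤ B₂'.card := Finset.card_le_card Finset.sdiff_subset
      have h8 : 1 ≤ R2.card := Finset.card_pos.2 ⟨g, hgR2⟩
      have h9 : C2.card ≤ B₂'.card := Finset.card_le_card hC2sub
      omega
    exact span_contra hb (freebie hb hB₂' hMbE hMbB hg he) hZE hsubcl hZcard


/-- Normalized version of the main theorem. -/
lemma main2 {M Mb : Matroid α} {b B₂' B₁ B₂ B₁' B₂'' : Finset α}
    (hb : M.IsBase (b : Set α)) (hB₂' : M.IsBase (B₂' : Set α))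
    (hMbE : Mb.E = M.E)
    (hMbB : ∀ B : Set α, Mb.IsBase B ↔ M.IsBase B ∧ B ≠ (b : Set α))
    {e f g h : α}
    (he : e ∈ B₁ \ B₂) (hf : f ∈ B₂ \ B₁)
    (hb_eq : b = insert f (B₁.erase e)) (hB₂'_eq : B₂' = insert e (B₂.erase f))
    (hB₂M : M.IsBase (B₂ : Set α))
    (hg : g ∈ b \ B₂') (hh : h ∈ B₂' \ b)
    (hB₁'_eq : B₁' = insert h (b.erase g)) (hB₂''_eq : B₂'' = insert g (B₂'.erase h))
    (hB₂''M : M.IsBase (B₂'' : Set α)) :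
    Relation.ReflTransGen (SymExchStep Mb) {B₁, B₂} {B₁', B₂''} := by
  obtain ⟨heB₁, heB₂⟩ := Finset.mem_sdiff.1 he
  obtain ⟨hfB₂, hfB₁⟩ := Finset.mem_sdiff.1 hf
  have hfe : f ≠ e := fun hcon => hfB₁ (hcon ▸ heB₁)
  have hB₁_eq : B₁ = insert e (b.erase f) := by
    rw [hb_eq, Finset.erase_insert (by simp [hfB₁]), Finset.insert_erase heB₁]
  have hB₂_eq : B₂ = insert f (B₂'.erase e) := by
    rw [hB₂'_eq, Finset.erase_insert (by simp [heB₂]), Finset.insert_erase hfB₂]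
  have hfb : f ∈ b \ B₂' := by
    refine Finset.mem_sdiff.2 ⟨hb_eq ▸ Finset.mem_insert_self f _, ?_⟩
    rw [hB₂'_eq]
    simp only [Finset.mem_insert, Finset.mem_erase, not_or]
    exact ⟨hfe, fun hc => hc.1 rfl⟩
  have heB : e ∈ B₂' \ b := by
    refine Finset.mem_sdiff.2 ⟨hB₂'_eq ▸ Finset.mem_insert_self e _, ?_⟩
    rw [hb_eq]
    simp only [Finset.mem_insert, Finset.mem_erase, not_or]
    exact ⟨fun hc => hfe hc.symm, fun hc => hc.1 rfl⟩
  have hres := core hb hB₂' hMbE hMbB hfb heB hg hh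
    (by rw [← hB₂_eq]; exact hB₂M) (by rw [← hB₂''_eq]; exact hB₂''M)
  rw [← hB₁_eq, ← hB₂_eq, ← hB₁'_eq, ← hB₂''_eq] at hres
  exact hres

end Aux

/-- Let `Mb` be the matroid whose bases are the bases of `M` other than `b`.
If `{b, B₂'}` is obtained from `{B₁, B₂}` by one symmetric exchange step in `M`,
and `{B₁', B₂''}` is obtained from `{b, B₂'}` by one symmetric exchange step in
`M`, where `B₁, B₂, B₁', B₂''` are bases of `Mb` and `B₂'` is a basis of `M`,
then `{B₁', B₂''}` is obtained from `{B₁, B₂}` by a finite sequence of symmetric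
exchange steps in `Mb`. -/
theorem stmt3 [DecidableEq α] (M Mb : Matroid α) (hE : M.E.Finite)
    (b : Finset α) (hb : M.IsBase (b : Set α))
    (hMbE : Mb.E = M.E)
    (hMbB : ∀ B : Set α, Mb.IsBase B ↔ M.IsBase B ∧ B ≠ (b : Set α))
    (B₁ B₂ B₁' B₂'' B₂' : Finset α)
    (h₁ : Mb.IsBase (B₁ : Set α)) (h₂ : Mb.IsBase (B₂ : Set α))
    (h₁' : Mb.IsBase (B₁' : Set α)) (h₂'' : Mb.IsBase (B₂'' : Set α))
    (h₂' : M.IsBase (B₂' : Set α))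
    (hstep1 : SymExchStep M {B₁, B₂} {b, B₂'})
    (hstep2 : SymExchStep M {b, B₂'} {B₁', B₂''}) :
    Relation.ReflTransGen (SymExchStep Mb) {B₁, B₂} {B₁', B₂''} := by
  have h₁M : M.IsBase (B₁ : Set α) := ((hMbB _).1 h₁).1
  have h₂M : M.IsBase (B₂ : Set α) := ((hMbB _).1 h₂).1
  have h₁'M : M.IsBase (B₁' : Set α) := ((hMbB _).1 h₁').1
  have h₂''M : M.IsBase (B₂'' : Set α) := ((hMbB _).1 h₂'').1
  obtain ⟨e, f, he, hf, hor1⟩ := step_pair hstep1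
  obtain ⟨g, h, hg, hh, hor2⟩ := step_pair hstep2
  have hpc : ∀ X Y : Finset α, ({X, Y} : Multiset (Finset α)) = {Y, X} := by
    intro X Y; exact Multiset.cons_swap X Y 0
  rcases hor1 with ⟨hbe, hB₂'e⟩ | ⟨hB₂'e, hbe⟩
  · rcases hor2 with ⟨hB₁'e, hB₂''e⟩ | ⟨hB₂''e, hB₁'e⟩
    · exact main2 hb h₂' hMbE hMbB he hf hbe hB₂'e h₂M hg hh hB₁'e hB₂''e h₂''M
    · rw [show ({B₁', B₂''} : Multiset (Finset α)) = {B₂'', B₁'} from hpc _ _]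
      exact main2 hb h₂' hMbE hMbB he hf hbe hB₂'e h₂M hg hh hB₂''e hB₁'e h₁'M
  · rcases hor2 with ⟨hB₁'e, hB₂''e⟩ | ⟨hB₂''e, hB₁'e⟩
    · rw [show ({B₁, B₂} : Multiset (Finset α)) = {B₂, B₁} from hpc _ _]
      exact main2 hb h₂' hMbE hMbB hf he hbe hB₂'e h₁M hg hh hB₁'e hB₂''e h₂''M
    · rw [show ({B₁, B₂} : Multiset (Finset α)) = {B₂, B₁} from hpc _ _,
        show ({B₁', B₂''} : Multiset (Finset α)) = {B₂'', B₁'} from hpc _ _]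
      exact main2 hb h₂' hMbE hMbB hf he hbe hB₂'e h₁M hg hh hB₂''e hB₁'e h₁'M
end

section
/- Let M be a matroid on a finite ground set E satisfying the strong White condition, and let b be a basis of M such that the collection B(M) \ {b} is the collection of bases of a matroid M_b on E. If M_b satisfies the weak White condition, then M_b satisfies the strong White condition. -/
open Matroid

variable {α : Type*}

/-- `T` is obtained from `S` by a quadratic move in `M`: `S = S₀ + {B₁, B₂}` and
`T = S₀ + {B₁', B₂'}` for bases `B₁, B₂, B₁', B₂'` of `M` with
`B₁ + B₂ = B₁' + B₂'` as multisets of elements. -/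
def QuadMove [DecidableEq α] (M : Matroid α) (S T : Multiset (Finset α)) : Prop :=
  ∃ (S₀ : Multiset (Finset α)) (B₁ B₂ B₁' B₂' : Finset α),
    (∀ B ∈ S₀, M.IsBase (B : Set α)) ∧
    M.IsBase (B₁ : Set α) ∧ M.IsBase (B₂ : Set α) ∧
    M.IsBase (B₁' : Set α) ∧ M.IsBase (B₂' : Set α) ∧
    B₁.val + B₂.val = B₁'.val + B₂'.val ∧
    S = B₁ ::ₘ B₂ ::ₘ S₀ ∧ T = B₁' ::ₘ B₂' ::ₘ S₀

/-- `M` satisfies the weak White condition: any two multisets of bases of `M`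
with equal element multiset sums are connected by a finite sequence of quadratic moves. -/
def WeakWhite [DecidableEq α] (M : Matroid α) : Prop :=
  ∀ S T : Multiset (Finset α),
    (∀ B ∈ S, M.IsBase (B : Set α)) → (∀ B ∈ T, M.IsBase (B : Set α)) →
    (S.map Finset.val).sum = (T.map Finset.val).sum →
    Relation.ReflTransGen (QuadMove M) S T

section AuxOuter
open Set

set_option linter.unusedSectionVars false
section Aux
variable [DecidableEq α] {M Mb : Matroid α} {bF D : Finset α}

/-- A finite independent set with at least as many elements as a base is a base. -/
lemma baseOfCard (hbF : M.IsBase (bF : Set α)) {Y : Set α} (hY : M.Indep Y)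
    (hcard : (bF.card : ℕ∞) ≤ Y.encard) : M.IsBase Y := by
  obtain ⟨B', hB', hYB'⟩ := hY.exists_isBase_superset
  have h1 : B'.encard = (bF : Set α).encard := hB'.encard_eq_encard_of_isBase hbF
  rw [Set.encard_coe_eq_coe_finsetCard] at h1
  have hfin : B'.Finite := by
    rw [← Set.encard_ne_top_iff, h1]; simp
  have : Y = B' := hfin.eq_of_subset_of_encard_le' hYB' (by rw [h1]; exact hcard)
  rwa [this]

/-- An independent set inside the closure of `Z` has at most `|Z|` elements. -/
lemma cardLeOfSubsetClosure (hbF : M.IsBase (bF : Set α)) {J Z : Finset α}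
    (hJ : M.Indep (J : Set α)) (hZE : (Z : Set α) ⊆ M.E)
    (hsub : (J : Set α) ⊆ M.closure (Z : Set α)) : J.card ≤ Z.card := by
  obtain ⟨Z', hZ'⟩ := M.exists_isBasis (Z : Set α) hZE
  have hclZ : M.closure Z' = M.closure (Z : Set α) := hZ'.closure_eq_closure
  by_contra hlt
  push_neg at hlt
  have hZ'fin : Z'.Finite := (Z.finite_toSet).subset hZ'.subset
  have hZ'card : Z'.encard ≤ (Z.card : ℕ∞) := by
    rw [← Set.encard_coe_eq_coe_finsetCard]
    exact Set.encard_le_encard hZ'.subset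
  have hJcard : Z'.encard < (J : Set α).encard := by
    rw [Set.encard_coe_eq_coe_finsetCard]
    exact lt_of_le_of_lt hZ'card (by exact_mod_cast hlt)
  obtain ⟨t, htJ, hti⟩ := hZ'.indep.augment hJ hJcard
  have htZ' : t ∉ Z' := fun h => htJ.2 h
  have := (hZ'.indep.insert_indep_iff_of_notMem htZ').mp hti
  exact this.2 (hclZ ▸ hsub htJ.1)
end Aux

section Aux2
set_option linter.unusedSectionVars false
variable [DecidableEq α] {M Mb : Matroid α} {bF D : Finset α}

/-- Key lemma: if `B(Mb) = B(M) \ {bF}` is a matroid, `D` is a base of `M`, `u ∈ bF \ D`,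
`v ∈ D \ bF`, then `bF - u + v` is a base of `M`. -/
lemma chR (hMbB : ∀ B : Set α, Mb.IsBase B ↔ M.IsBase B ∧ B ≠ (bF : Set α))
    (hbF : M.IsBase (bF : Set α)) (hD : M.IsBase (D : Set α)) {u v : α}
    (hu : u ∈ bF) (huD : u ∉ D) (hv : v ∈ D) (hvb : v ∉ bF) :
    M.IsBase ((insert v (bF.erase u) : Finset α) : Set α) := by
  set I : Finset α := bF.erase u with hIdef
  have hIco : (I : Set α) = (bF : Set α) \ {u} := by simp [hIdef]
  have hI : M.Indep (I : Set α) := hbF.indep.subset (by rw [hIco]; exact diff_subset)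
  have hucl : u ∉ M.closure (I : Set α) := by
    rw [hIco]; exact hbF.indep.notMem_closure_sdiff_of_mem hu
  have hcard : bF.card = D.card := by
    have := hbF.encard_eq_encard_of_isBase hD
    rwa [Set.encard_coe_eq_coe_finsetCard, Set.encard_coe_eq_coe_finsetCard,
      Nat.cast_inj] at this
  have hbental : 1 ≤ bF.card := Finset.card_pos.mpr ⟨u, hu⟩
  have hIcard : I.card = bF.card - 1 := Finset.card_erase_of_mem hu
  have hvI : v ∉ I := fun h => hvb (Finset.mem_of_mem_erase h)
  have hvE : v ∈ M.E := hD.subset_ground hv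
  -- suppose not
  by_contra hnb
  have hdep : ¬ M.Indep ((insert v (bF.erase u) : Finset α) : Set α) := by
    intro hind
    exact hnb (baseOfCard hbF hind (by
      rw [Set.encard_coe_eq_coe_finsetCard, Finset.card_insert_of_notMem hvI, hIcard]
      exact_mod_cast by omega))
  rw [Finset.coe_insert] at hdep
  have hvcl : v ∈ M.closure (I : Set α) := by
    by_contra hvcl
    exact hdep ((hI.insert_indep_iff_of_notMem (by exact_mod_cast hvI)).mpr ⟨hvE, hvcl⟩)
  -- get z ∈ D outside the closure of I
  have hIenc : (I : Set α).encard < (D : Set α).encard := by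
    rw [Set.encard_coe_eq_coe_finsetCard, Set.encard_coe_eq_coe_finsetCard, hIcard]
    exact_mod_cast by omega
  obtain ⟨z, hzD, hzi⟩ := hI.augment hD.indep hIenc
  have hzI : z ∉ (I : Set α) := hzD.2
  have hzcl : z ∉ M.closure (I : Set α) :=
    ((hI.insert_indep_iff_of_notMem hzI).mp hzi).2
  have hzu : z ≠ u := fun h => huD (by exact_mod_cast h ▸ hzD.1)
  have hzbF : z ∉ bF := by
    intro h
    exact hzI (by rw [hIco]; exact ⟨h, by simpa using hzu⟩)
  have hzv : z ≠ v := fun h => hzcl (h ▸ hvcl)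
  -- X_w := insert z I is an Mb-base
  have hXw : M.IsBase (insert z (I : Set α)) :=
    baseOfCard hbF hzi (by
      rw [Set.encard_insert_of_notMem hzI, Set.encard_coe_eq_coe_finsetCard, hIcard]
      exact_mod_cast by omega)
  have hXwMb : Mb.IsBase (insert z (I : Set α)) := by
    rw [hMbB]
    refine ⟨hXw, fun h => hzbF ?_⟩
    have : z ∈ (bF : Set α) := h ▸ mem_insert z _
    exact_mod_cast this
  -- construct Y₀ := insert u J, J a basis of (insert v I) containing v
  have hvind : M.Indep ({v} : Set α) := hD.indep.subset (by simpa using hv)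
  have hKE : insert v (I : Set α) ⊆ M.E :=
    insert_subset hvE (hI.subset_ground)
  obtain ⟨J, hJ, hvJ⟩ := hvind.subset_isBasis_of_subset
    (singleton_subset_iff.mpr (mem_insert v _)) hKE
  have hIbasis : M.IsBasis (I : Set α) (insert v (I : Set α)) :=
    hI.isBasis_of_subset_of_subset_closure (subset_insert _ _)
      (insert_subset hvcl (M.subset_closure _ hI.subset_ground))
  have hJcard : J.encard = (I : Set α).encard := hJ.encard_eq_encard hIbasis
  have hclJ : M.closure J = M.closure (I : Set α) := by
    rw [hJ.closure_eq_closure, ← hIbasis.closure_eq_closure]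
  have huJ : u ∉ J := by
    intro h
    have : u ∈ insert v (I : Set α) := hJ.subset h
    rcases this with h' | h'
    · exact hvb (by exact_mod_cast h' ▸ hu)
    · rw [hIco] at h'; exact h'.2 rfl
  have huclJ : u ∉ M.closure J := by rw [hclJ]; exact hucl
  have hY0ind : M.Indep (insert u J) :=
    (hJ.indep.insert_indep_iff_of_notMem huJ).mpr ⟨hbF.subset_ground (by exact_mod_cast hu), huclJ⟩
  have hY0 : M.IsBase (insert u J) :=
    baseOfCard hbF hY0ind (by
      rw [Set.encard_insert_of_notMem huJ, hJcard, Set.encard_coe_eq_coe_finsetCard, hIcard]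
      exact_mod_cast by omega)
  have hY0Mb : Mb.IsBase (insert u J) := by
    rw [hMbB]
    refine ⟨hY0, fun h => hvb ?_⟩
    have hvmem : v ∈ insert u J := mem_insert_of_mem u (hvJ rfl)
    rw [h] at hvmem
    exact_mod_cast hvmem
  -- exchange z out of X_w into Y₀
  have hzXw : z ∈ insert z (I : Set α) \ insert u J := by
    refine ⟨mem_insert z _, ?_⟩
    rintro (h | h)
    · exact hzu h
    · have : z ∈ insert v (I : Set α) := hJ.subset h
      rcases this with h' | h'
      · exact hzv h'
      · exact hzI h'
  obtain ⟨y, hy, hyB⟩ := hXwMb.exchange hY0Mb hzXw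
  have hXwz : insert z (I : Set α) \ {z} = (I : Set α) := by
    rw [insert_diff_of_mem _ (rfl : z ∈ {z}), diff_singleton_eq_self hzI]
  rw [hXwz] at hyB
  -- y ∈ {u, v}
  have hyuv : y = u ∨ y = v := by
    rcases hy.1 with h | h
    · exact Or.inl h
    · rcases hJ.subset h with h' | h'
      · exact Or.inr h'
      · exact (hy.2 (Set.mem_insert_of_mem z h')).elim
  rcases hyuv with hyu | hyv
  · -- insert u I = bF : contradiction with Mb.IsBase
    have : Mb.IsBase (bF : Set α) := by
      have hins : insert u (I : Set α) = (bF : Set α) := by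
        rw [hIco, insert_diff_singleton, insert_eq_of_mem (by exact_mod_cast hu)]
      rw [hyu] at hyB
      rwa [hins] at hyB
    rw [hMbB] at this
    exact this.2 rfl
  · -- insert v I is a base: contradiction with hdep
    rw [hyv] at hyB
    exact hdep ((hMbB _).mp hyB).1.indep
end Aux2

section Aux3
set_option linter.unusedSectionVars false
variable [DecidableEq α] {M Mb : Matroid α} {bF D : Finset α}

/-- If `x ∉ D` and no exchange of `x` into `D` dropping an element outside `Z` gives a base,
then `x` is in the closure of `Z`. -/
lemma closureTrap (hD : M.IsBase (D : Set α)) {x : α} (hxE : x ∈ M.E) (hxD : x ∉ D)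
    {Z : Finset α} (hZD : Z ⊆ D)
    (hno : ∀ y ∈ D, y ∉ Z → ¬ M.IsBase ((insert x (D.erase y) : Finset α) : Set α)) :
    x ∈ M.closure (Z : Set α) := by
  by_contra hxcl
  have hZind : M.Indep (Z : Set α) := hD.indep.subset (by exact_mod_cast hZD)
  have hxZ : x ∉ (Z : Set α) := fun h => hxD (hZD (by exact_mod_cast h))
  have hJind : M.Indep (insert x (Z : Set α)) :=
    (hZind.insert_indep_iff_of_notMem hxZ).mpr ⟨hxE, hxcl⟩
  obtain ⟨B', hB', hJB', hB'sub⟩ := hJind.exists_isBase_subset_union_isBase hD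
  have hxB' : x ∈ B' := hJB' (mem_insert x _)
  have hB'card : B'.encard = (D : Set α).encard := hB'.encard_eq_encard_of_isBase hD
  have hB'fin : B'.Finite := by
    rw [← Set.encard_ne_top_iff, hB'card, Set.encard_coe_eq_coe_finsetCard]; simp
  -- B' ⊆ insert x D, with encard D, so misses exactly one y ∈ D
  have hB'sub' : B' ⊆ insert x (D : Set α) := by
    refine hB'sub.trans ?_
    rw [Set.union_subset_iff]
    exact ⟨insert_subset_insert (fun t ht => hZD (by exact_mod_cast ht) : (Z : Set α) ⊆ D),
      subset_insert _ _⟩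
  have hne : B' ≠ insert x (D : Set α) := by
    intro h
    have : (insert x (D : Set α)).encard = (D : Set α).encard := by rw [← h, hB'card]
    rw [Set.encard_insert_of_notMem (by exact_mod_cast hxD)] at this
    have hDfin : (D : Set α).Finite := D.finite_toSet
    rw [Set.encard_coe_eq_coe_finsetCard,
      show ((D.card : ℕ∞) + 1) = ((D.card + 1 : ℕ) : ℕ∞) by push_cast; ring,
      Nat.cast_inj] at this
    omega
  obtain ⟨y, hy, hyB'⟩ : ∃ y, y ∈ insert x (D : Set α) ∧ y ∉ B' := by
    by_contra h
    push_neg at h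
    exact hne (hB'sub'.antisymm h)
  have hyD : y ∈ (D : Set α) := by
    rcases hy with h | h
    · exact absurd (h ▸ hxB') hyB'
    · exact h
  have hyZ : y ∉ Z := fun h => hyB' (hJB' (mem_insert_of_mem x (by exact_mod_cast h)))
  -- B' = insert x (D \ {y})
  have hBeq : B' = insert x ((D : Set α) \ {y}) := by
    apply ((D.finite_toSet.diff (t := {y})).insert x).eq_of_subset_of_encard_le'
    · intro t ht
      rcases hB'sub' ht with h | h
      · exact h ▸ mem_insert _ _
      · exact mem_insert_of_mem _ ⟨h, fun h' => hyB' (h' ▸ ht)⟩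
    · rw [Set.encard_insert_of_notMem (fun h => hxD (by exact_mod_cast h.1)),
        Set.encard_diff_singleton_of_mem hyD, hB'card, Set.encard_coe_eq_coe_finsetCard]
      have h1 : 1 ≤ D.card := Finset.card_pos.mpr ⟨y, by exact_mod_cast hyD⟩
      rw [← Nat.cast_one (R := ℕ∞), ← ENat.coe_sub, ← Nat.cast_add, Nat.cast_le]
      omega
  refine hno y (by exact_mod_cast hyD) hyZ ?_
  have : ((insert x (D.erase y) : Finset α) : Set α) = insert x ((D : Set α) \ {y}) := by
    push_cast [Finset.coe_erase]; rfl
  rw [this, ← hBeq]; exact hB'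
end Aux3

/-- The exchange graph between `bF` and `D`. -/
def XEdge [DecidableEq α] (M : Matroid α) (bF D : Finset α) (x y : α) : Prop :=
  x ∈ bF ∧ x ∉ D ∧ y ∈ D ∧ y ∉ bF ∧ M.IsBase ((insert x (D.erase y) : Finset α) : Set α)

/-- One "rook move" between exchange pairs. -/
def XStep [DecidableEq α] (M : Matroid α) (bF D : Finset α) (p q : α × α) : Prop :=
  XEdge M bF D q.1 q.2 ∧ (p.1 = q.1 ∨ p.2 = q.2)

section Aux4
set_option linter.unusedSectionVars false
variable [DecidableEq α] {M Mb : Matroid α} {bF D : Finset α}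

lemma xconn (hMbB : ∀ B : Set α, Mb.IsBase B ↔ M.IsBase B ∧ B ≠ (bF : Set α))
    (hbF : M.IsBase (bF : Set α)) (hD : M.IsBase (D : Set α)) {u v u' v' : α}
    (he : XEdge M bF D u v) (he' : XEdge M bF D u' v') :
    Relation.ReflTransGen (XStep M bF D) (u, v) (u', v') := by
  classical
  by_contra hnr
  set Reach : α × α → Prop :=
    fun p => Relation.ReflTransGen (XStep M bF D) (u, v) p with hReach
  have key1 : ∀ {x y y'}, Reach (x, y) → XEdge M bF D x y' → Reach (x, y') :=
    fun hr he'' => hr.tail ⟨he'', Or.inl rfl⟩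
  have key2 : ∀ {x y x'}, Reach (x, y) → XEdge M bF D x' y → Reach (x', y) :=
    fun hr he'' => hr.tail ⟨he'', Or.inr rfl⟩
  set S1 : Finset α := bF \ D with hS1
  set S2 : Finset α := D \ bF with hS2
  set U1 : Finset α := S1.filter (fun x => ∃ y, XEdge M bF D x y ∧ Reach (x, y)) with hU1
  set V1 : Finset α := S2.filter (fun y => ∃ x, XEdge M bF D x y ∧ Reach (x, y)) with hV1
  set U2 : Finset α := S1 \ U1 with hU2
  set V2 : Finset α := S2 \ V1 with hV2
  have huS1 : u ∈ S1 := Finset.mem_sdiff.mpr ⟨he.1, he.2.1⟩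
  have hvS2 : v ∈ S2 := Finset.mem_sdiff.mpr ⟨he.2.2.1, he.2.2.2.1⟩
  have hu'S1 : u' ∈ S1 := Finset.mem_sdiff.mpr ⟨he'.1, he'.2.1⟩
  have hv'S2 : v' ∈ S2 := Finset.mem_sdiff.mpr ⟨he'.2.2.1, he'.2.2.2.1⟩
  have huU1 : u ∈ U1 := Finset.mem_filter.mpr ⟨huS1, v, he, Relation.ReflTransGen.refl⟩
  have hvV1 : v ∈ V1 := Finset.mem_filter.mpr ⟨hvS2, u, he, Relation.ReflTransGen.refl⟩
  have hu'U1 : u' ∉ U1 := by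
    intro h
    obtain ⟨_, y₀, he₀, hr₀⟩ := Finset.mem_filter.mp h
    exact hnr (key1 hr₀ he')
  have hv'V1 : v' ∉ V1 := by
    intro h
    obtain ⟨_, x₀, he₀, hr₀⟩ := Finset.mem_filter.mp h
    exact hnr (key2 hr₀ he')
  have hu'U2 : u' ∈ U2 := Finset.mem_sdiff.mpr ⟨hu'S1, hu'U1⟩
  have hv'V2 : v' ∈ V2 := Finset.mem_sdiff.mpr ⟨hv'S2, hv'V1⟩
  -- closure facts
  have hZD1 : (D ∩ bF) ∪ V1 ⊆ D := by
    intro t ht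
    rcases Finset.mem_union.mp ht with h | h
    · exact (Finset.mem_inter.mp h).1
    · exact (Finset.mem_sdiff.mp (Finset.mem_filter.mp h).1).1
  have hZD2 : (D ∩ bF) ∪ V2 ⊆ D := by
    intro t ht
    rcases Finset.mem_union.mp ht with h | h
    · exact (Finset.mem_inter.mp h).1
    · exact (Finset.mem_sdiff.mp (Finset.mem_sdiff.mp h).1).1
  have hcl1 : ∀ x ∈ U1, (x : α) ∈ M.closure (((D ∩ bF) ∪ V1 : Finset α) : Set α) := by
    intro x hx
    obtain ⟨hxS1, y₀, he₀, hr₀⟩ := Finset.mem_filter.mp hx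
    obtain ⟨hxb, hxD⟩ := Finset.mem_sdiff.mp hxS1
    refine closureTrap hD (hbF.subset_ground (by exact_mod_cast hxb)) hxD hZD1 ?_
    intro y hyD hyZ hbase
    have hyb : y ∉ bF := fun h => hyZ (Finset.mem_union_left _ (Finset.mem_inter.mpr ⟨hyD, h⟩))
    have hedge : XEdge M bF D x y := ⟨hxb, hxD, hyD, hyb, hbase⟩
    exact hyZ (Finset.mem_union_right _
      (Finset.mem_filter.mpr ⟨Finset.mem_sdiff.mpr ⟨hyD, hyb⟩, x, hedge, key1 hr₀ hedge⟩))
  have hcl2 : ∀ x ∈ U2, (x : α) ∈ M.closure (((D ∩ bF) ∪ V2 : Finset α) : Set α) := by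
    intro x hx
    obtain ⟨hxS1, hxU1⟩ := Finset.mem_sdiff.mp hx
    obtain ⟨hxb, hxD⟩ := Finset.mem_sdiff.mp hxS1
    refine closureTrap hD (hbF.subset_ground (by exact_mod_cast hxb)) hxD hZD2 ?_
    intro y hyD hyZ hbase
    have hyb : y ∉ bF := fun h => hyZ (Finset.mem_union_left _ (Finset.mem_inter.mpr ⟨hyD, h⟩))
    have hyS2 : y ∈ S2 := Finset.mem_sdiff.mpr ⟨hyD, hyb⟩
    have hedge : XEdge M bF D x y := ⟨hxb, hxD, hyD, hyb, hbase⟩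
    have hyV1 : y ∈ V1 := by
      by_contra hyV1
      exact hyZ (Finset.mem_union_right _ (Finset.mem_sdiff.mpr ⟨hyS2, hyV1⟩))
    obtain ⟨_, x₀, he₀, hr₀⟩ := Finset.mem_filter.mp hyV1
    exact hxU1 (Finset.mem_filter.mpr ⟨hxS1, y, hedge, key2 hr₀ hedge⟩)
  -- cardinalities
  have hcards : bF.card = D.card := by
    have := hbF.encard_eq_encard_of_isBase hD
    rwa [Set.encard_coe_eq_coe_finsetCard, Set.encard_coe_eq_coe_finsetCard,
      Nat.cast_inj] at this
  have hS1c : S1.card + (bF ∩ D).card = bF.card := Finset.card_sdiff_add_card_inter bF D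
  have hS2c : S2.card + (D ∩ bF).card = D.card := Finset.card_sdiff_add_card_inter D bF
  have hIc : (D ∩ bF).card = (bF ∩ D).card := by rw [Finset.inter_comm]
  have hU1S1 : U1 ⊆ S1 := Finset.filter_subset _ _
  have hV1S2 : V1 ⊆ S2 := Finset.filter_subset _ _
  have hU2c : U2.card = S1.card - U1.card := Finset.card_sdiff_of_subset hU1S1
  have hV2c : V2.card = S2.card - V1.card := Finset.card_sdiff_of_subset hV1S2
  have hU1le : U1.card ≤ S1.card := Finset.card_le_card hU1S1
  have hV1le : V1.card ≤ S2.card := Finset.card_le_card hV1S2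
  -- the main contradiction, two symmetric cases
  by_cases hUV : U1.card ≤ V1.card
  · -- use u ∈ U1, v' ∈ V2
    have hBbase : M.IsBase ((insert v' (bF.erase u) : Finset α) : Set α) :=
      chR hMbB hbF hD he.1 he.2.1 he'.2.2.1 he'.2.2.2.1
    set Z : Finset α := ((D ∩ bF) ∪ V2) ∪ U1.erase u with hZ
    have hZE : (Z : Set α) ⊆ M.E := by
      intro t ht
      simp only [hZ, Finset.coe_union, Set.mem_union] at ht
      rcases ht with (h | h) | h
      · exact hD.subset_ground (by exact_mod_cast (Finset.mem_inter.mp (by exact_mod_cast h)).1)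
      · exact hD.subset_ground (by exact_mod_cast hZD2 (Finset.mem_union_right _ (by exact_mod_cast h)))
      · exact hbF.subset_ground (by
          exact_mod_cast (Finset.mem_sdiff.mp (hU1S1 (Finset.mem_of_mem_erase (by exact_mod_cast h)))).1)
    have hsub : ((insert v' (bF.erase u) : Finset α) : Set α) ⊆ M.closure (Z : Set α) := by
      intro t ht
      rw [Finset.coe_insert, Set.mem_insert_iff] at ht
      rcases ht with rfl | ht
      · exact M.subset_closure _ hZE (by
          exact_mod_cast Finset.mem_union_left _ (Finset.mem_union_right _ hv'V2))
      · have htb : t ∈ bF := Finset.mem_of_mem_erase (by exact_mod_cast ht)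
        have htu : t ≠ u := Finset.ne_of_mem_erase (by exact_mod_cast ht)
        by_cases htD : t ∈ D
        · exact M.subset_closure _ hZE (by
            exact_mod_cast Finset.mem_union_left _
              (Finset.mem_union_left _ (Finset.mem_inter.mpr ⟨htD, htb⟩)))
        · have htS1 : t ∈ S1 := Finset.mem_sdiff.mpr ⟨htb, htD⟩
          by_cases htU1 : t ∈ U1
          · exact M.subset_closure _ hZE (by
              exact_mod_cast Finset.mem_union_right _ (Finset.mem_erase.mpr ⟨htu, htU1⟩))
          · refine M.closure_subset_closure ?_ (hcl2 t (Finset.mem_sdiff.mpr ⟨htS1, htU1⟩))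
            exact_mod_cast Finset.coe_subset.mpr Finset.subset_union_left
    have hcardle : (insert v' (bF.erase u)).card ≤ Z.card :=
      cardLeOfSubsetClosure hbF hBbase.indep hZE hsub
    have hBc : (insert v' (bF.erase u)).card = bF.card := by
      rw [Finset.card_insert_of_notMem (fun h => he'.2.2.2.1 (Finset.mem_of_mem_erase h)),
        Finset.card_erase_of_mem he.1]
      have : 1 ≤ bF.card := Finset.card_pos.mpr ⟨u, he.1⟩
      omega
    have hZc : Z.card ≤ (D ∩ bF).card + V2.card + (U1.card - 1) := by
      calc Z.card ≤ ((D ∩ bF) ∪ V2).card + (U1.erase u).card := Finset.card_union_le _ _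
        _ ≤ (D ∩ bF).card + V2.card + (U1.erase u).card := by
            have := Finset.card_union_le (D ∩ bF) V2; omega
        _ = (D ∩ bF).card + V2.card + (U1.card - 1) := by rw [Finset.card_erase_of_mem huU1]
    have hU1pos : 1 ≤ U1.card := Finset.card_pos.mpr ⟨u, huU1⟩
    omega
  · -- V1.card < U1.card ; use u' ∈ U2, v ∈ V1
    push_neg at hUV
    have hBbase : M.IsBase ((insert v (bF.erase u') : Finset α) : Set α) :=
      chR hMbB hbF hD he'.1 he'.2.1 he.2.2.1 he.2.2.2.1
    set Z : Finset α := ((D ∩ bF) ∪ V1) ∪ U2.erase u' with hZ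
    have hZE : (Z : Set α) ⊆ M.E := by
      intro t ht
      simp only [hZ, Finset.coe_union, Set.mem_union] at ht
      rcases ht with (h | h) | h
      · exact hD.subset_ground (by exact_mod_cast (Finset.mem_inter.mp (by exact_mod_cast h)).1)
      · exact hD.subset_ground (by exact_mod_cast hZD1 (Finset.mem_union_right _ (by exact_mod_cast h)))
      · exact hbF.subset_ground (by
          exact_mod_cast (Finset.mem_sdiff.mp ((Finset.sdiff_subset) (Finset.mem_of_mem_erase (by exact_mod_cast h)))).1)
    have hsub : ((insert v (bF.erase u') : Finset α) : Set α) ⊆ M.closure (Z : Set α) := by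
      intro t ht
      rw [Finset.coe_insert, Set.mem_insert_iff] at ht
      rcases ht with rfl | ht
      · exact M.subset_closure _ hZE (by
          exact_mod_cast Finset.mem_union_left _ (Finset.mem_union_right _ hvV1))
      · have htb : t ∈ bF := Finset.mem_of_mem_erase (by exact_mod_cast ht)
        have htu : t ≠ u' := Finset.ne_of_mem_erase (by exact_mod_cast ht)
        by_cases htD : t ∈ D
        · exact M.subset_closure _ hZE (by
            exact_mod_cast Finset.mem_union_left _
              (Finset.mem_union_left _ (Finset.mem_inter.mpr ⟨htD, htb⟩)))
        · have htS1 : t ∈ S1 := Finset.mem_sdiff.mpr ⟨htb, htD⟩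
          by_cases htU1 : t ∈ U1
          · refine M.closure_subset_closure ?_ (hcl1 t htU1)
            exact_mod_cast Finset.coe_subset.mpr Finset.subset_union_left
          · exact M.subset_closure _ hZE (by
              exact_mod_cast Finset.mem_union_right _
                (Finset.mem_erase.mpr ⟨htu, Finset.mem_sdiff.mpr ⟨htS1, htU1⟩⟩))
    have hcardle : (insert v (bF.erase u')).card ≤ Z.card :=
      cardLeOfSubsetClosure hbF hBbase.indep hZE hsub
    have hBc : (insert v (bF.erase u')).card = bF.card := by
      rw [Finset.card_insert_of_notMem (fun h => he.2.2.2.1 (Finset.mem_of_mem_erase h)),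
        Finset.card_erase_of_mem he'.1]
      have : 1 ≤ bF.card := Finset.card_pos.mpr ⟨u', he'.1⟩
      omega
    have hZc : Z.card ≤ (D ∩ bF).card + V1.card + (U2.card - 1) := by
      calc Z.card ≤ ((D ∩ bF) ∪ V1).card + (U2.erase u').card := Finset.card_union_le _ _
        _ ≤ (D ∩ bF).card + V1.card + (U2.erase u').card := by
            have := Finset.card_union_le (D ∩ bF) V1; omega
        _ = (D ∩ bF).card + V1.card + (U2.card - 1) := by rw [Finset.card_erase_of_mem hu'U2]
    have hU2pos : 1 ≤ U2.card := Finset.card_pos.mpr ⟨u', hu'U2⟩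
    omega
end Aux4

/-- The pair of bases `{bF - x + y, D - y + x}` as a multiset. -/
def pairMS [DecidableEq α] (bF D : Finset α) (x y : α) : Multiset (Finset α) :=
  insert y (bF.erase x) ::ₘ insert x (D.erase y) ::ₘ 0

section Aux5
set_option linter.unusedSectionVars false
variable [DecidableEq α] {M Mb : Matroid α} {bF D : Finset α}

lemma swapHelper {s : Finset α} {a b c : α} (hb : b ∈ s) (ha : a ∉ s)
    (hac : a ≠ c) (hbc : b ≠ c) :
    insert b ((insert a (s.erase b)).erase c) = insert a (s.erase c) := by
  have hab : a ≠ b := fun h => ha (h ▸ hb)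
  ext t
  simp only [Finset.mem_insert, Finset.mem_erase]
  constructor
  · rintro (rfl | ⟨htc, (rfl | ⟨htb, hts⟩)⟩)
    · exact Or.inr ⟨hbc, hb⟩
    · exact Or.inl rfl
    · exact Or.inr ⟨htc, hts⟩
  · rintro (rfl | ⟨htc, hts⟩)
    · exact Or.inr ⟨hac, Or.inl rfl⟩
    · by_cases htb : t = b
      · exact Or.inl htb
      · exact Or.inr ⟨htc, Or.inr ⟨htb, hts⟩⟩

lemma neBF_of_mem_not_mem {X : Finset α} {t : α} (ht : t ∈ X) (htb : t ∉ bF) :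
    (X : Set α) ≠ (bF : Set α) := by
  intro h
  have : t ∈ (bF : Set α) := h ▸ (by exact_mod_cast ht)
  exact htb (by exact_mod_cast this)

lemma rookStep (hMbB : ∀ B : Set α, Mb.IsBase B ↔ M.IsBase B ∧ B ≠ (bF : Set α))
    (hbF : M.IsBase (bF : Set α)) (hD : M.IsBase (D : Set α))
    (h2 : ∀ x y, x ∈ bF → x ∉ D → y ∈ D → y ∉ bF → insert x (D.erase y) ≠ bF)
    {x y x' y' : α} (hxy : XEdge M bF D x y) (hx'y' : XEdge M bF D x' y')
    (hsh : x = x' ∨ y = y') :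
    Relation.ReflTransGen (SymExchStep Mb) (pairMS bF D x y) (pairMS bF D x' y') := by
  obtain ⟨hxb, hxD, hyD, hyb, hbxy⟩ := hxy
  obtain ⟨hx'b, hx'D, hy'D, hy'b, hbx'y'⟩ := hx'y'
  have c1 : ∀ {p q : α}, p ∈ bF → p ∉ D → q ∈ D → q ∉ bF →
      Mb.IsBase ((insert q (bF.erase p) : Finset α) : Set α) := by
    intro p q hp hpD hq hqb
    exact (hMbB _).mpr ⟨chR hMbB hbF hD hp hpD hq hqb,
      neBF_of_mem_not_mem (Finset.mem_insert_self _ _) hqb⟩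
  have c2 : ∀ {p q : α}, p ∈ bF → p ∉ D → q ∈ D → q ∉ bF →
      M.IsBase ((insert p (D.erase q) : Finset α) : Set α) →
      Mb.IsBase ((insert p (D.erase q) : Finset α) : Set α) := by
    intro p q hp hpD hq hqb hbase
    exact (hMbB _).mpr ⟨hbase, fun h => h2 p q hp hpD hq hqb (Finset.coe_injective h)⟩
  rcases hsh with rfl | rfl
  · -- x = x'
    by_cases hyy : y = y'
    · subst hyy; exact Relation.ReflTransGen.refl
    · have hyx : y ≠ x := fun h => hxD (h ▸ hyD)
      have hy'x : y' ≠ x := fun h => hxD (h ▸ hy'D)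
      have hE1 : (insert y (bF.erase x)).erase y = bF.erase x :=
        Finset.erase_insert (fun h => hyb (Finset.mem_of_mem_erase h))
      have hE2 : insert y ((insert x (D.erase y)).erase y') = insert x (D.erase y') :=
        swapHelper hyD hxD (fun h => hy'x h.symm) hyy
      refine Relation.ReflTransGen.single ?_
      refine ⟨0, insert y (bF.erase x), insert x (D.erase y), y, y', ?_, ?_, ?_, ?_, ?_, ?_, ?_, ?_, ?_⟩
      · intro B hB; simp at hB
      · exact c1 hxb hxD hyD hyb
      · exact c2 hxb hxD hyD hyb hbxy
      · refine Finset.mem_sdiff.mpr ⟨Finset.mem_insert_self _ _, fun h => ?_⟩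
        rcases Finset.mem_insert.mp h with h' | h'
        · exact hyx h'
        · exact Finset.notMem_erase y D h'
      · refine Finset.mem_sdiff.mpr
          ⟨Finset.mem_insert_of_mem (Finset.mem_erase.mpr ⟨fun h => hyy h.symm, hy'D⟩), fun h => ?_⟩
        rcases Finset.mem_insert.mp h with h' | h'
        · exact hyy h'.symm
        · exact hy'b (Finset.mem_of_mem_erase h')
      · rw [hE1]
        exact c1 hxb hxD hy'D hy'b
      · rw [hE2]
        exact c2 hxb hxD hy'D hy'b hbx'y'
      · rfl
      · rw [hE1, hE2]; rfl
  · -- y = y'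
    by_cases hxx : x = x'
    · subst hxx; exact Relation.ReflTransGen.refl
    · have hyx : y ≠ x := fun h => hxD (h ▸ hyD)
      have hyx' : y ≠ x' := fun h => hx'D (h ▸ hyD)
      have hE1 : (insert x (D.erase y)).erase x = D.erase y :=
        Finset.erase_insert (fun h => hxD (Finset.mem_of_mem_erase h))
      have hE2 : insert x ((insert y (bF.erase x)).erase x') = insert y (bF.erase x') :=
        swapHelper hxb hyb hyx' hxx
      refine Relation.ReflTransGen.single ?_
      refine ⟨0, insert x (D.erase y), insert y (bF.erase x), x, x', ?_, ?_, ?_, ?_, ?_, ?_, ?_, ?_, ?_⟩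
      · intro B hB; simp at hB
      · exact c2 hxb hxD hyD hyb hbxy
      · exact c1 hxb hxD hyD hyb
      · refine Finset.mem_sdiff.mpr ⟨Finset.mem_insert_self _ _, fun h => ?_⟩
        rcases Finset.mem_insert.mp h with h' | h'
        · exact hyx h'.symm
        · exact Finset.notMem_erase x bF h'
      · refine Finset.mem_sdiff.mpr
          ⟨Finset.mem_insert_of_mem (Finset.mem_erase.mpr ⟨fun h => hxx h.symm, hx'b⟩), fun h => ?_⟩
        rcases Finset.mem_insert.mp h with h' | h'
        · exact hxx h'.symm
        · exact hx'D (Finset.mem_of_mem_erase h')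
      · rw [hE1]
        exact c2 hx'b hx'D hyD hyb hbx'y'
      · rw [hE2]
        exact c1 hx'b hx'D hyD hyb
      · exact (Multiset.cons_swap _ _ _)
      · rw [hE1, hE2]
        exact (Multiset.cons_swap _ _ _)
end Aux5

section Aux6
set_option linter.unusedSectionVars false
variable [DecidableEq α] {M Mb : Matroid α} {bF D : Finset α}

lemma xpathConv (hMbB : ∀ B : Set α, Mb.IsBase B ↔ M.IsBase B ∧ B ≠ (bF : Set α))
    (hbF : M.IsBase (bF : Set α)) (hD : M.IsBase (D : Set α))
    (h2 : ∀ x y, x ∈ bF → x ∉ D → y ∈ D → y ∉ bF → insert x (D.erase y) ≠ bF)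
    {u v : α} (he : XEdge M bF D u v) {p : α × α}
    (hr : Relation.ReflTransGen (XStep M bF D) (u, v) p) :
    XEdge M bF D p.1 p.2 ∧
      Relation.ReflTransGen (SymExchStep Mb) (pairMS bF D u v) (pairMS bF D p.1 p.2) := by
  induction hr with
  | refl => exact ⟨he, Relation.ReflTransGen.refl⟩
  | tail hab hbc ih =>
    exact ⟨hbc.1, ih.2.trans (rookStep hMbB hbF hD h2 ih.1 hbc.1 hbc.2)⟩

lemma cardStep (h : SymExchStep M S T) : Multiset.card T = Multiset.card S := by
  obtain ⟨S₀, B₁, B₂, e, f, _, _, _, _, _, _, _, hSeq, hTeq⟩ := h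
  rw [hSeq, hTeq]; simp

lemma sumStep (h : SymExchStep M S T) :
    (S.map Finset.val).sum = (T.map Finset.val).sum := by
  obtain ⟨S₀, B₁, B₂, e, f, _, _, _, he, hf, _, _, hSeq, hTeq⟩ := h
  obtain ⟨heB₁, heB₂⟩ := Finset.mem_sdiff.mp he
  obtain ⟨hfB₂, hfB₁⟩ := Finset.mem_sdiff.mp hf
  have h1 : (insert f (B₁.erase e)).val = f ::ₘ B₁.val.erase e := by
    rw [Finset.insert_val_of_notMem (fun h => hfB₁ (Finset.mem_of_mem_erase h)),
      Finset.erase_val]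
  have h2 : (insert e (B₂.erase f)).val = e ::ₘ B₂.val.erase f := by
    rw [Finset.insert_val_of_notMem (fun h => heB₂ (Finset.mem_of_mem_erase h)),
      Finset.erase_val]
  rw [hSeq, hTeq]
  simp only [Multiset.map_cons, Multiset.sum_cons, h1, h2]
  have he1 : e ∈ B₁.val := heB₁
  have hf2 : f ∈ B₂.val := hfB₂
  conv_lhs => rw [← Multiset.cons_erase he1, ← Multiset.cons_erase hf2]
  rw [← Multiset.singleton_add, ← Multiset.singleton_add (a := f),
    ← Multiset.singleton_add (a := f) (s := B₁.val.erase e),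
    ← Multiset.singleton_add (a := e) (s := B₂.val.erase f)]
  abel

lemma badUnique {X Y : Multiset (Finset α)} (hX : bF ∈ X) (hY : bF ∈ Y)
    (hcX : Multiset.card X = 2) (hcY : Multiset.card Y = 2)
    (hsum : (X.map Finset.val).sum = (Y.map Finset.val).sum) : X = Y := by
  obtain ⟨X', hX'⟩ := Multiset.exists_cons_of_mem hX
  obtain ⟨Y', hY'⟩ := Multiset.exists_cons_of_mem hY
  rw [hX'] at hcX; rw [hY'] at hcY
  simp only [Multiset.card_cons] at hcX hcY
  obtain ⟨X₂, hX₂⟩ := Multiset.card_eq_one.mp (by omega : Multiset.card X' = 1)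
  obtain ⟨Y₂, hY₂⟩ := Multiset.card_eq_one.mp (by omega : Multiset.card Y' = 1)
  rw [hX', hX₂, hY', hY₂] at hsum ⊢
  simp only [Multiset.map_cons, Multiset.sum_cons, Multiset.map_singleton,
    Multiset.sum_singleton] at hsum
  have : X₂.val = Y₂.val := by
    exact add_left_cancel hsum
  rw [Finset.val_inj.mp this]

lemma goodStep (hMbB : ∀ B : Set α, Mb.IsBase B ↔ M.IsBase B ∧ B ≠ (bF : Set α))
    {S T : Multiset (Finset α)} (h : SymExchStep M S T) (hS : bF ∉ S) (hT : bF ∉ T) :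
    SymExchStep Mb S T := by
  obtain ⟨S₀, B₁, B₂, e, f, hS₀, hB₁, hB₂, he, hf, hB₁', hB₂', hSeq, hTeq⟩ := h
  have conv : ∀ (X : Finset α) (U : Multiset (Finset α)), bF ∉ U → X ∈ U →
      M.IsBase (X : Set α) → Mb.IsBase (X : Set α) := by
    intro X U hU hXU hbase
    refine (hMbB _).mpr ⟨hbase, fun hco => hU ?_⟩
    rwa [← Finset.coe_injective hco]
  refine ⟨S₀, B₁, B₂, e, f, ?_, ?_, ?_, he, hf, ?_, ?_, hSeq, hTeq⟩
  · intro B hB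
    exact conv B S hS (by rw [hSeq]; exact Multiset.mem_cons_of_mem (Multiset.mem_cons_of_mem hB))
      (hS₀ B hB)
  · exact conv B₁ S hS (by rw [hSeq]; exact Multiset.mem_cons_self _ _) hB₁
  · exact conv B₂ S hS (by rw [hSeq]; exact Multiset.mem_cons_of_mem (Multiset.mem_cons_self _ _)) hB₂
  · exact conv _ T hT (by rw [hTeq]; exact Multiset.mem_cons_self _ _) hB₁'
  · exact conv _ T hT (by rw [hTeq]; exact Multiset.mem_cons_of_mem (Multiset.mem_cons_self _ _)) hB₂'

lemma entryData {P X : Multiset (Finset α)} (hstep : SymExchStep M P X) (hP : bF ∉ P)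
    (hX : bF ∈ X) (hcard : Multiset.card P = 2) :
    ∃ (Dz : Finset α) (u v : α), M.IsBase (Dz : Set α) ∧ u ∈ bF ∧ u ∉ Dz ∧ v ∈ Dz ∧ v ∉ bF ∧
      M.IsBase ((insert u (Dz.erase v) : Finset α) : Set α) ∧ insert u (Dz.erase v) ≠ bF ∧
      X = bF ::ₘ Dz ::ₘ 0 ∧ P = pairMS bF Dz u v := by
  obtain ⟨S₀, B₁, B₂, e, f, hS₀, hB₁, hB₂, he, hf, hB₁', hB₂', hSeq, hTeq⟩ := hstep
  obtain ⟨heB₁, heB₂⟩ := Finset.mem_sdiff.mp he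
  obtain ⟨hfB₂, hfB₁⟩ := Finset.mem_sdiff.mp hf
  have hef : e ≠ f := fun h => hfB₁ (h ▸ heB₁)
  have hS₀0 : S₀ = 0 := by
    have := congrArg Multiset.card hSeq
    simp only [Multiset.card_cons, hcard] at this
    exact Multiset.card_eq_zero.mp (by omega)
  subst hS₀0
  have hB₁P : B₁ ≠ bF := fun h => hP (by rw [hSeq, h]; exact Multiset.mem_cons_self _ _)
  have hB₂P : B₂ ≠ bF := fun h => hP (by
    rw [hSeq, h]; exact Multiset.mem_cons_of_mem (Multiset.mem_cons_self _ _))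
  have hXcases : insert f (B₁.erase e) = bF ∨ insert e (B₂.erase f) = bF := by
    rw [hTeq] at hX
    rcases Multiset.mem_cons.mp hX with h | h
    · exact Or.inl h.symm
    · rcases Multiset.mem_cons.mp h with h' | h'
      · exact Or.inr h'.symm
      · simp at h'
  have hEr1 : (insert f (B₁.erase e)).erase f = B₁.erase e :=
    Finset.erase_insert (fun h => hfB₁ (Finset.mem_of_mem_erase h))
  have hEr2 : (insert e (B₂.erase f)).erase e = B₂.erase f :=
    Finset.erase_insert (fun h => heB₂ (Finset.mem_of_mem_erase h))
  rcases hXcases with hA | hB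
  · -- bF = B₁ - e + f ; Dz = B₂ - f + e ; u := f, v := e
    refine ⟨insert e (B₂.erase f), f, e, hB₂', ?_, ?_, Finset.mem_insert_self _ _, ?_, ?_, ?_, ?_, ?_⟩
    · rw [← hA]; exact Finset.mem_insert_self _ _
    · intro h
      rcases Finset.mem_insert.mp h with h' | h'
      · exact hef h'.symm
      · exact Finset.notMem_erase f B₂ h'
    · intro h
      rw [← hA] at h
      rcases Finset.mem_insert.mp h with h' | h'
      · exact hef h'
      · exact Finset.notMem_erase e B₁ h'
    · rw [hEr2, Finset.insert_erase hfB₂]; exact hB₂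
    · rw [hEr2, Finset.insert_erase hfB₂]; exact hB₂P
    · rw [hTeq, hA]
    · rw [hSeq]
      unfold pairMS
      rw [← hA, hEr1, Finset.insert_erase heB₁, hEr2, Finset.insert_erase hfB₂]
  · -- bF = B₂ - f + e ; Dz = B₁ - e + f ; u := e, v := f
    refine ⟨insert f (B₁.erase e), e, f, hB₁', ?_, ?_, Finset.mem_insert_self _ _, ?_, ?_, ?_, ?_, ?_⟩
    · rw [← hB]; exact Finset.mem_insert_self _ _
    · intro h
      rcases Finset.mem_insert.mp h with h' | h'
      · exact hef h'
      · exact Finset.notMem_erase e B₁ h'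
    · intro h
      rw [← hB] at h
      rcases Finset.mem_insert.mp h with h' | h'
      · exact hef h'.symm
      · exact Finset.notMem_erase f B₂ h'
    · rw [hEr1, Finset.insert_erase heB₁]; exact hB₁
    · rw [hEr1, Finset.insert_erase heB₁]; exact hB₁P
    · rw [hTeq, hB]; exact Multiset.cons_swap _ _ _
    · rw [hSeq]
      unfold pairMS
      rw [← hB, hEr2, Finset.insert_erase hfB₂, hEr1, Finset.insert_erase heB₁]
      exact Multiset.cons_swap _ _ _

lemma exitData {X Y : Multiset (Finset α)} {Dz : Finset α}
    (hstep : SymExchStep M X Y) (hXeq : X = bF ::ₘ Dz ::ₘ 0) (hY : bF ∉ Y)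
    (hDzbF : Dz ≠ bF) :
    ∃ (u' v' : α), u' ∈ bF ∧ u' ∉ Dz ∧ v' ∈ Dz ∧ v' ∉ bF ∧
      M.IsBase ((insert u' (Dz.erase v') : Finset α) : Set α) ∧
      insert u' (Dz.erase v') ≠ bF ∧ Y = pairMS bF Dz u' v' := by
  obtain ⟨S₀, C₁, C₂, e, f, hS₀, hC₁, hC₂, he, hf, hC₁', hC₂', hSeq, hTeq⟩ := hstep
  obtain ⟨heC₁, heC₂⟩ := Finset.mem_sdiff.mp he
  obtain ⟨hfC₂, hfC₁⟩ := Finset.mem_sdiff.mp hf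
  have hpair0 : bF ::ₘ Dz ::ₘ 0 = C₁ ::ₘ C₂ ::ₘ S₀ := by rw [← hXeq, hSeq]
  have hS₀0 : S₀ = 0 := by
    have := congrArg Multiset.card hpair0
    simp only [Multiset.card_cons, Multiset.card_zero] at this
    exact Multiset.card_eq_zero.mp (by omega)
  subst hS₀0
  have hpair : bF ::ₘ Dz ::ₘ 0 = C₁ ::ₘ C₂ ::ₘ 0 := hpair0
  have hcases : (C₁ = bF ∧ C₂ = Dz) ∨ (C₁ = Dz ∧ C₂ = bF) := by
    rcases Multiset.cons_eq_cons.mp hpair with ⟨h1, h2⟩ | ⟨hne, cs, h1, h2⟩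
    · left
      refine ⟨h1.symm, ?_⟩
      rw [Multiset.cons_zero, Multiset.cons_zero] at h2
      exact (Multiset.singleton_inj.mp h2).symm
    · right
      have hcs : cs = 0 := by
        have := congrArg Multiset.card h1
        simp only [Multiset.card_cons, Multiset.card_zero] at this
        exact Multiset.card_eq_zero.mp (by omega)
      subst hcs
      rw [Multiset.cons_zero, Multiset.cons_zero] at h1 h2
      exact ⟨(Multiset.singleton_inj.mp h1).symm, Multiset.singleton_inj.mp h2⟩
  have hYne : ∀ W ∈ Y, W ≠ bF := fun W hW heq => hY (heq ▸ hW)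
  rcases hcases with ⟨h1, h2⟩ | ⟨h1, h2⟩
  · -- C₁ = bF, C₂ = Dz : u' := e, v' := f
    subst h1; subst h2
    refine ⟨e, f, heC₁, heC₂, hfC₂, hfC₁, hC₂', ?_, hTeq⟩
    refine hYne _ ?_
    rw [hTeq]
    exact Multiset.mem_cons_of_mem (Multiset.mem_cons_self _ _)
  · -- C₁ = Dz, C₂ = bF : u' := f, v' := e
    subst h1; subst h2
    refine ⟨f, e, hfC₂, hfC₁, heC₁, heC₂, hC₁', ?_, ?_⟩
    · refine hYne _ ?_
      rw [hTeq]
      exact Multiset.mem_cons_self _ _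
    · rw [hTeq]
      exact Multiset.cons_swap _ _ _
end Aux6

section Aux7
set_option linter.unusedSectionVars false
variable [DecidableEq α] {M Mb : Matroid α} {bF : Finset α}

lemma localFix (hMbB : ∀ B : Set α, Mb.IsBase B ↔ M.IsBase B ∧ B ≠ (bF : Set α))
    (hbF : M.IsBase (bF : Set α)) {P X Y : Multiset (Finset α)}
    (hP : bF ∉ P) (hY : bF ∉ Y) (hPcard : Multiset.card P = 2)
    (h1 : SymExchStep M P X) (hbad : bF ∈ X) (h2 : SymExchStep M X Y) :
    Relation.ReflTransGen (SymExchStep Mb) P Y := by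
  obtain ⟨Dz, u, v, hDz, hu, huD, hv, hvb, hbase, hne, hXeq, hPeq⟩ :=
    entryData h1 hP hbad hPcard
  have hDzbF : Dz ≠ bF := fun h => huD (h ▸ hu)
  obtain ⟨u', v', hu', hu'D, hv', hv'b, hbase', hne', hYeq⟩ :=
    exitData h2 hXeq hY hDzbF
  have h2cond : ∀ x y, x ∈ bF → x ∉ Dz → y ∈ Dz → y ∉ bF → insert x (Dz.erase y) ≠ bF := by
    intro x y hx hxD hy hyb heq
    have hux : u = x := by
      have : u ∈ insert x (Dz.erase y) := heq ▸ hu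
      rcases Finset.mem_insert.mp this with h | h
      · exact h
      · exact (huD (Finset.mem_of_mem_erase h)).elim
    have hvy : v = y := by
      by_contra hvy
      have : v ∈ insert x (Dz.erase y) := Finset.mem_insert_of_mem (Finset.mem_erase.mpr ⟨hvy, hv⟩)
      rw [heq] at this
      exact hvb this
    exact hne (hux ▸ hvy ▸ heq)
  have exy : XEdge M bF Dz u v := ⟨hu, huD, hv, hvb, hbase⟩
  have ex'y' : XEdge M bF Dz u' v' := ⟨hu', hu'D, hv', hv'b, hbase'⟩
  have hreach := xconn hMbB hbF hDz exy ex'y'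
  have hconv := xpathConv hMbB hbF hDz h2cond exy hreach
  rw [hPeq, hYeq]
  exact hconv.2

lemma pathConv (hMbB : ∀ B : Set α, Mb.IsBase B ↔ M.IsBase B ∧ B ≠ (bF : Set α))
    (hbF : M.IsBase (bF : Set α)) {T : Multiset (Finset α)} (hT : bF ∉ T)
    {X : Multiset (Finset α)} (hr : Relation.ReflTransGen (SymExchStep M) X T) :
    Multiset.card X = 2 →
      ((bF ∉ X → Relation.ReflTransGen (SymExchStep Mb) X T) ∧
       (bF ∈ X → ∀ P, bF ∉ P → Multiset.card P = 2 → SymExchStep M P X →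
          Relation.ReflTransGen (SymExchStep Mb) P T)) := by
  induction hr using Relation.ReflTransGen.head_induction_on with
  | refl =>
    intro _
    refine ⟨fun _ => Relation.ReflTransGen.refl, fun hbad => absurd hbad hT⟩
  | head hab hbt ih =>
    intro hcard
    rename_i a c
    have hcc : Multiset.card c = 2 := by rw [cardStep hab, hcard]
    refine ⟨?_, ?_⟩
    · intro hga
      by_cases hgc : bF ∈ c
      · exact (ih hcc).2 hgc a hga hcard hab
      · exact Relation.ReflTransGen.head (goodStep hMbB hab hga hgc) ((ih hcc).1 hgc)
    · intro hba P hPg hPc hstep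
      by_cases hgc : bF ∈ c
      · have hac : a = c := badUnique hba hgc hcard hcc (sumStep hab)
        exact (ih hcc).2 hgc P hPg hPc (hac ▸ hstep)
      · exact (localFix hMbB hbF hPg hgc hPc hstep hba hab).trans ((ih hcc).1 hgc)

lemma liftStep {S₀ P Q : Multiset (Finset α)} (h : SymExchStep Mb P Q)
    (hS₀ : ∀ B ∈ S₀, Mb.IsBase (B : Set α)) : SymExchStep Mb (P + S₀) (Q + S₀) := by
  obtain ⟨S₀', B₁, B₂, e, f, hS₀', hB₁, hB₂, he, hf, hB₁', hB₂', hPeq, hQeq⟩ := h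
  refine ⟨S₀' + S₀, B₁, B₂, e, f, ?_, hB₁, hB₂, he, hf, hB₁', hB₂', ?_, ?_⟩
  · intro B hB
    rcases Multiset.mem_add.mp hB with h | h
    · exact hS₀' B h
    · exact hS₀ B h
  · rw [hPeq]; simp [Multiset.cons_add]
  · rw [hQeq]; simp [Multiset.cons_add]

lemma liftRTG {S₀ P Q : Multiset (Finset α)}
    (h : Relation.ReflTransGen (SymExchStep Mb) P Q)
    (hS₀ : ∀ B ∈ S₀, Mb.IsBase (B : Set α)) :
    Relation.ReflTransGen (SymExchStep Mb) (P + S₀) (Q + S₀) := by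
  induction h with
  | refl => exact Relation.ReflTransGen.refl
  | tail _ hbc ih => exact ih.tail (liftStep hbc hS₀)
end Aux7

section Aux8
set_option linter.unusedSectionVars false
variable [DecidableEq α] {M Mb : Matroid α} {bF : Finset α}

lemma pairConnect (hMbB : ∀ B : Set α, Mb.IsBase B ↔ M.IsBase B ∧ B ≠ (bF : Set α))
    (hbF : M.IsBase (bF : Set α)) (hM : StrongWhite M) {B₁ B₂ B₁' B₂' : Finset α}
    (h1 : Mb.IsBase (B₁ : Set α)) (h2 : Mb.IsBase (B₂ : Set α))
    (h1' : Mb.IsBase (B₁' : Set α)) (h2' : Mb.IsBase (B₂' : Set α))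
    (hsum : B₁.val + B₂.val = B₁'.val + B₂'.val) :
    Relation.ReflTransGen (SymExchStep Mb) (B₁ ::ₘ B₂ ::ₘ 0) (B₁' ::ₘ B₂' ::ₘ 0) := by
  have hNe : ∀ {W : Finset α}, Mb.IsBase (W : Set α) → W ≠ bF := by
    intro W hW heq
    exact ((hMbB _).mp hW).2 (by rw [heq])
  have hMpath : Relation.ReflTransGen (SymExchStep M) (B₁ ::ₘ B₂ ::ₘ 0) (B₁' ::ₘ B₂' ::ₘ 0) := by
    refine hM _ _ ?_ ?_ ?_
    · intro B hB
      rcases Multiset.mem_cons.mp hB with rfl | hB'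
      · exact ((hMbB _).mp h1).1
      · rcases Multiset.mem_cons.mp hB' with rfl | hB''
        · exact ((hMbB _).mp h2).1
        · simp at hB''
    · intro B hB
      rcases Multiset.mem_cons.mp hB with rfl | hB'
      · exact ((hMbB _).mp h1').1
      · rcases Multiset.mem_cons.mp hB' with rfl | hB''
        · exact ((hMbB _).mp h2').1
        · simp at hB''
    · simpa using hsum
  have hSg : bF ∉ (B₁ ::ₘ B₂ ::ₘ (0 : Multiset (Finset α))) := by
    intro h
    rcases Multiset.mem_cons.mp h with h' | h'
    · exact hNe h1 h'.symm
    · rcases Multiset.mem_cons.mp h' with h'' | h''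
      · exact hNe h2 h''.symm
      · simp at h''
  have hTg : bF ∉ (B₁' ::ₘ B₂' ::ₘ (0 : Multiset (Finset α))) := by
    intro h
    rcases Multiset.mem_cons.mp h with h' | h'
    · exact hNe h1' h'.symm
    · rcases Multiset.mem_cons.mp h' with h'' | h''
      · exact hNe h2' h''.symm
      · simp at h''
  exact (pathConv hMbB hbF hTg hMpath (by simp)).1 hSg

lemma quadConv (hMbB : ∀ B : Set α, Mb.IsBase B ↔ M.IsBase B ∧ B ≠ (bF : Set α))
    (hbF : M.IsBase (bF : Set α)) (hM : StrongWhite M) {U U' : Multiset (Finset α)}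
    (h : QuadMove Mb U U') : Relation.ReflTransGen (SymExchStep Mb) U U' := by
  obtain ⟨S₀, B₁, B₂, B₁', B₂', hS₀, h1, h2, h1', h2', hsum, hUeq, hU'eq⟩ := h
  have hlift := liftRTG (pairConnect hMbB hbF hM h1 h2 h1' h2' hsum) hS₀
  have e1 : B₁ ::ₘ B₂ ::ₘ S₀ = (B₁ ::ₘ B₂ ::ₘ 0) + S₀ := by
    simp [Multiset.cons_add]
  have e2 : B₁' ::ₘ B₂' ::ₘ S₀ = (B₁' ::ₘ B₂' ::ₘ 0) + S₀ := by
    simp [Multiset.cons_add]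
  rw [hUeq, hU'eq, e1, e2]
  exact hlift
end Aux8


end AuxOuter

/-- If `M` satisfies the strong White condition, the bases of `Mb` are exactly
the bases of `M` other than `b`, and `Mb` satisfies the weak White condition,
then `Mb` satisfies the strong White condition. -/
theorem stmt5 [DecidableEq α] (M Mb : Matroid α) (hE : M.E.Finite)
    (hM : StrongWhite M)
    (b : Set α) (hb : M.IsBase b)
    (hMbE : Mb.E = M.E)
    (hMbB : ∀ B : Set α, Mb.IsBase B ↔ M.IsBase B ∧ B ≠ b)
    (hweak : WeakWhite Mb) :
    StrongWhite Mb := by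
  intro S T hS hT hsum
  have hbfin : b.Finite := hE.subset hb.subset_ground
  have hbco : (hbfin.toFinset : Set α) = b := hbfin.coe_toFinset
  set bF : Finset α := hbfin.toFinset with hbFdef
  have hMbB' : ∀ B : Set α, Mb.IsBase B ↔ M.IsBase B ∧ B ≠ (bF : Set α) := by
    intro B
    rw [hbco]
    exact hMbB B
  have hbF : M.IsBase (bF : Set α) := by rw [hbco]; exact hb
  have hq := hweak S T hS hT hsum
  clear hS hT hsum
  induction hq with
  | refl => exact Relation.ReflTransGen.refl
  | tail _ hbc ih => exact ih.trans (quadConv hMbB' hbF hM hbc)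
end

section
/- Let M be a matroid on a finite ground set E and let b be a basis of M such that the collection B(M) \ {b} is the collection of bases of a matroid M_b on E. Let B₁, B₂, B₁', B₂' be bases of M, all different from b, such that {B₁', B₂'} is obtained from {B₁, B₂} by a single symmetric exchange step in M, and assume there exist bases C₁, C₂, C₃ of M, all different from b, with b + B₁ + B₂ = C₁ + C₂ + C₃ as multisets of elements of E. Then the triple multiset {b, B₁', B₂'} can be obtained from {b, B₁, B₂} by a finite sequence of symmetric exchange steps in M in which no step is of type b, i.e., in no step are the two exchanged bases both different from b while the untouched remainder of the triple contains b. -/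
open Matroid

set_option linter.unusedSectionVars false
set_option linter.unusedVariables false
variable {α : Type*}

/-- A symmetric exchange step that is not of type `b`: it is not the case that
both exchanged bases differ from `b` while the untouched remainder contains `b`. -/
def SymExchStepNotTypeB [DecidableEq α] (M : Matroid α) (b : Finset α)
    (S T : Multiset (Finset α)) : Prop :=
  ∃ (S₀ : Multiset (Finset α)) (B₁ B₂ : Finset α) (e f : α),
    (∀ B ∈ S₀, M.IsBase (B : Set α)) ∧
    M.IsBase (B₁ : Set α) ∧ M.IsBase (B₂ : Set α) ∧
    e ∈ B₁ \ B₂ ∧ f ∈ B₂ \ B₁ ∧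
    M.IsBase ((insert f (B₁.erase e) : Finset α) : Set α) ∧
    M.IsBase ((insert e (B₂.erase f) : Finset α) : Set α) ∧
    S = B₁ ::ₘ B₂ ::ₘ S₀ ∧
    T = insert f (B₁.erase e) ::ₘ insert e (B₂.erase f) ::ₘ S₀ ∧
    ¬(B₁ ≠ b ∧ B₂ ≠ b ∧ b ∈ S₀)

section helpers
variable [DecidableEq α]
lemma tri23 (a b c : Finset α) : ({a,b,c} : Multiset (Finset α)) = {a,c,b} :=
  congrArg (a ::ₘ ·) (Multiset.cons_swap b c 0)

lemma erase_comm' (s : Finset α) (a b : α) : (s.erase a).erase b = (s.erase b).erase a := by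
  ext x; simp only [Finset.mem_erase]; tauto

lemma fcard_eq {M : Matroid α} {A B : Finset α} (hA : M.IsBase (A : Set α))
    (hB : M.IsBase (B : Set α)) : A.card = B.card := by
  have := hA.encard_eq_encard_of_isBase hB
  rwa [Set.encard_coe_eq_coe_finsetCard, Set.encard_coe_eq_coe_finsetCard, Nat.cast_inj] at this

lemma exchange_fin (M : Matroid α) {A B : Finset α} {e : α} (hA : M.IsBase (A : Set α))
    (hB : M.IsBase (B : Set α)) (heA : e ∈ A) (heB : e ∉ B) :
    ∃ y ∈ B, y ∉ A ∧ M.IsBase ((insert y (A.erase e) : Finset α) : Set α) := by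
  obtain ⟨y, hy, hbase⟩ := hA.exchange hB ⟨Finset.mem_coe.mpr heA, fun h => heB (by simpa using h)⟩
  refine ⟨y, by simpa using hy.1, by simpa using hy.2, ?_⟩
  rwa [Finset.coe_insert, Finset.coe_erase]

lemma exchange_into (M : Matroid α) {B K : Finset α} (hB : M.IsBase (B : Set α)) {g : α}
    (hgB : g ∉ B) (hK : K ⊆ B) (hKg : M.Indep ((insert g K : Finset α) : Set α)) :
    ∃ v ∈ B, v ∉ K ∧ M.IsBase ((insert g (B.erase v) : Finset α) : Set α) := by
  have hgE : g ∈ M.E := hKg.subset_ground (by simp)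
  have hsub : ((insert g K : Finset α) : Set α) ⊆ insert g (B : Set α) := by
    rw [Finset.coe_insert]
    exact Set.insert_subset_insert (by exact_mod_cast hK)
  have hXE : insert g (B : Set α) ⊆ M.E := Set.insert_subset hgE hB.subset_ground
  obtain ⟨J, hJbasis, hIJ⟩ := hKg.subset_isBasis_of_subset hsub hXE
  have hJbase : M.IsBase J := hJbasis.isBase_of_isBase_subset hB (Set.subset_insert _ _)
  have hJfin : J.Finite := (B.finite_toSet.insert g).subset hJbasis.subset
  obtain ⟨J', hJ'⟩ := hJfin.exists_finset_coe
  have hgJ' : g ∈ J' := by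
    have : g ∈ J := hIJ (by simp)
    rwa [← hJ', Finset.mem_coe] at this
  have hJ'sub : J' ⊆ insert g B := by
    have := hJbasis.subset; rw [← hJ'] at this
    intro a ha
    have := this (Finset.mem_coe.mpr ha)
    simpa using this
  have hcard : J'.card = B.card := fcard_eq (by rw [hJ']; exact hJbase) hB
  have hex : ∃ v ∈ B, v ∉ J' := by
    by_contra h
    push_neg at h
    have hsub2 : insert g B ⊆ J' := by
      intro a ha
      rcases Finset.mem_insert.mp ha with rfl | ha
      · exact hgJ'
      · exact h a ha
    have := Finset.card_le_card hsub2
    rw [Finset.card_insert_of_notMem hgB] at this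
    omega
  obtain ⟨v, hvB, hvJ'⟩ := hex
  have hvK : v ∉ K := by
    intro h
    apply hvJ'
    have : v ∈ J := hIJ (by simp [h])
    rwa [← hJ', Finset.mem_coe] at this
  have hvg : v ≠ g := fun h => hgB (h ▸ hvB)
  have hJ'eq : J' = insert g (B.erase v) := by
    apply Finset.eq_of_subset_of_card_le
    · intro a ha
      rcases Finset.mem_insert.mp (hJ'sub ha) with rfl | haB
      · exact Finset.mem_insert_self _ _
      · exact Finset.mem_insert_of_mem (Finset.mem_erase.mpr ⟨fun h => hvJ' (h ▸ ha), haB⟩)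
    · rw [Finset.card_insert_of_notMem (fun h => hgB (Finset.mem_of_mem_erase h)),
        Finset.card_erase_of_mem hvB, hcard]
      have : 1 ≤ B.card := Finset.card_pos.mpr ⟨v, hvB⟩
      omega
  refine ⟨v, hvB, hvK, ?_⟩
  rw [← hJ'eq, hJ']
  exact hJbase

lemma relax_base (M Mb : Matroid α)
    {b : Finset α} (hb : M.IsBase (b : Set α))
    (hMbB : ∀ B : Set α, Mb.IsBase B ↔ M.IsBase B ∧ B ≠ (b : Set α))
    {y x : α} {By Bx : Finset α} (hBy : M.IsBase (By : Set α)) (hyb : y ∈ b) (hyBy : y ∉ By)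
    (hBx : M.IsBase (Bx : Set α)) (hxBx : x ∈ Bx) (hxb : x ∉ b) :
    M.IsBase ((insert x (b.erase y) : Finset α) : Set α) := by
  obtain ⟨v, hvBy, hvb, hBhat⟩ := exchange_fin M hb hBy hyb hyBy
  by_cases hvx : v = x
  · rwa [hvx] at hBhat
  have hxi : M.Indep ((insert x (∅ : Finset α) : Finset α) : Set α) := by
    apply hBx.indep.subset
    intro a ha
    simp only [Finset.coe_insert, Finset.coe_empty, Set.mem_insert_iff,
      Set.mem_empty_iff_false, or_false] at ha
    exact ha ▸ (Finset.mem_coe.mpr hxBx)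
  obtain ⟨z, hzb, -, hB'⟩ := exchange_into M hb hxb (Finset.empty_subset b) hxi
  by_cases hzy : z = y
  · rwa [hzy] at hB'
  set Bhat : Finset α := insert v (b.erase y) with hBhatdef
  set B' : Finset α := insert x (b.erase z) with hB'def
  have hvnotb' : v ∉ B' := by
    simp only [hB'def, Finset.mem_insert, Finset.mem_erase]
    rintro (rfl | ⟨-, h⟩)
    · exact hvx rfl
    · exact hvb h
  have hBhatMb : Mb.IsBase (Bhat : Set α) := by
    rw [hMbB]
    refine ⟨hBhat, fun h => hvb ?_⟩
    have : v ∈ (Bhat : Set α) := by simp [hBhatdef]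
    rw [h] at this
    simpa using this
  have hB'Mb : Mb.IsBase (B' : Set α) := by
    rw [hMbB]
    refine ⟨hB', fun h => hxb ?_⟩
    have : x ∈ (B' : Set α) := by simp [hB'def]
    rw [h] at this
    simpa using this
  obtain ⟨w, hwB', hwBhat, hres⟩ : ∃ w ∈ B', w ∉ Bhat ∧
      Mb.IsBase ((insert w (Bhat.erase v) : Finset α) : Set α) := by
    have hvmem : v ∈ Bhat := by simp [hBhatdef]
    obtain ⟨w, hw, hbase⟩ := hBhatMb.exchange hB'Mb
      ⟨Finset.mem_coe.mpr hvmem, fun h => hvnotb' (by simpa using h)⟩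
    refine ⟨w, by simpa using hw.1, by simpa using hw.2, ?_⟩
    rwa [Finset.coe_insert, Finset.coe_erase]
  have herase : Bhat.erase v = b.erase y := by
    rw [hBhatdef, Finset.erase_insert]
    simp only [Finset.mem_erase]
    rintro ⟨-, h⟩
    exact hvb h
  rw [herase] at hres
  have hwcases : w = x ∨ w = y := by
    rcases Finset.mem_insert.mp hwB' with rfl | hwb
    · exact Or.inl rfl
    · right
      by_contra hwy
      exact hwBhat (Finset.mem_insert_of_mem
        (Finset.mem_erase.mpr ⟨hwy, Finset.mem_of_mem_erase hwb⟩))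
  rcases hwcases with rfl | rfl
  · exact ((hMbB _).mp hres).1
  · exfalso
    rw [Finset.insert_erase hyb] at hres
    exact ((hMbB _).mp hres).2 rfl

lemma step_mk (M : Matroid α) (b : Finset α) {X Y Z : Finset α} {e f : α}
    (hX : M.IsBase (X : Set α)) (hY : M.IsBase (Y : Set α)) (hZ : M.IsBase (Z : Set α))
    (heX : e ∈ X) (heY : e ∉ Y) (hfY : f ∈ Y) (hfX : f ∉ X)
    (hP : M.IsBase ((insert f (X.erase e) : Finset α) : Set α))
    (hQ : M.IsBase ((insert e (Y.erase f) : Finset α) : Set α))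
    (hok : X = b ∨ Y = b ∨ Z ≠ b) :
    SymExchStepNotTypeB M b {X, Y, Z} {insert f (X.erase e), insert e (Y.erase f), Z} := by
  refine ⟨{Z}, X, Y, e, f, ?_, hX, hY, Finset.mem_sdiff.mpr ⟨heX, heY⟩,
    Finset.mem_sdiff.mpr ⟨hfY, hfX⟩, hP, hQ, rfl, rfl, ?_⟩
  · intro B hB
    rw [Multiset.mem_singleton] at hB
    exact hB ▸ hZ
  · rintro ⟨h1, h2, h3⟩
    rw [Multiset.mem_singleton] at h3
    rcases hok with h | h | h
    · exact h1 h
    · exact h2 h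
    · exact h h3.symm

lemma count_lemma (M : Matroid α) {b X Y : Finset α} (hb : M.IsBase (b : Set α))
    (hC : ∃ C₁ C₂ C₃ : Finset α,
      M.IsBase (C₁ : Set α) ∧ M.IsBase (C₂ : Set α) ∧ M.IsBase (C₃ : Set α) ∧
      C₁ ≠ b ∧ C₂ ≠ b ∧ C₃ ≠ b ∧
      b.val + X.val + Y.val = C₁.val + C₂.val + C₃.val) :
    2 ≤ (X \ b).card ∨ 2 ≤ (Y \ b).card := by
  obtain ⟨C₁, C₂, C₃, hC₁, hC₂, hC₃, hn₁, hn₂, hn₃, hsum⟩ := hC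
  classical
  set p : α → Prop := fun a => a ∉ b with hp
  have hcount : ∀ A : Finset α, Multiset.countP p A.val = (A \ b).card := by
    intro A
    rw [Finset.sdiff_eq_filter]
    rw [Finset.card_def, Finset.filter_val, Multiset.countP_eq_card_filter]
  have hbz : Multiset.countP p b.val = 0 := by
    rw [Multiset.countP_eq_zero]
    intro a ha
    simp only [hp, not_not]
    exact ha
  have hCge : ∀ (C : Finset α), M.IsBase (C : Set α) → C ≠ b → 1 ≤ Multiset.countP p C.val := by
    intro C hCb hne
    rw [Nat.one_le_iff_ne_zero]
    intro h0
    rw [Multiset.countP_eq_zero] at h0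
    have hsub : C ⊆ b := fun a ha => by
      have := h0 a ha
      simpa [hp] using this
    exact hne (Finset.eq_of_subset_of_card_le hsub (le_of_eq (fcard_eq hb hCb)))
  have := congrArg (Multiset.countP p) hsum
  rw [Multiset.countP_add, Multiset.countP_add, Multiset.countP_add, Multiset.countP_add, hbz,
    hcount X, hcount Y] at this
  have h1 := hCge C₁ hC₁ hn₁
  have h2 := hCge C₂ hC₂ hn₂
  have h3 := hCge C₃ hC₃ hn₃
  omega

variable {M Mb : Matroid α} {b X Y : Finset α} {e f : α}

/-- Case `e ∈ b`, `f ∉ b`: two steps through `b`. -/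
lemma caseA (hb : M.IsBase (b : Set α))
    (hMbB : ∀ B : Set α, Mb.IsBase B ↔ M.IsBase B ∧ B ≠ (b : Set α))
    (hX : M.IsBase (X : Set α)) (hY : M.IsBase (Y : Set α))
    (heX : e ∈ X) (heY : e ∉ Y) (hfY : f ∈ Y) (hfX : f ∉ X)
    (hP : M.IsBase ((insert f (X.erase e) : Finset α) : Set α))
    (hQ : M.IsBase ((insert e (Y.erase f) : Finset α) : Set α))
    (hQb : insert e (Y.erase f) ≠ b)
    (heb : e ∈ b) (hfb : f ∉ b) :
    Relation.ReflTransGen (SymExchStepNotTypeB M b) {b, X, Y}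
      {b, insert f (X.erase e), insert e (Y.erase f)} := by
  have hef : e ≠ f := fun h => hfX (h ▸ heX)
  set P := insert f (X.erase e) with hPdef
  set Q := insert e (Y.erase f) with hQdef
  set b₁ := insert f (b.erase e) with hb₁def
  have hb₁base : M.IsBase (b₁ : Set α) := relax_base M Mb hb hMbB hY heb heY hY hfY hfb
  have s1 : SymExchStepNotTypeB M b {b, Y, X} {b₁, Q, X} :=
    step_mk M b hb hY hX heb heY hfY hfb hb₁base hQ (Or.inl rfl)
  have hfb₁ : f ∈ b₁ := Finset.mem_insert_self _ _
  have heb₁ : e ∉ b₁ := by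
    simp only [hb₁def, Finset.mem_insert, Finset.mem_erase]
    rintro (h | ⟨h, -⟩)
    · exact hef h
    · exact h rfl
  have hkey : insert e (b₁.erase f) = b := by
    rw [hb₁def, Finset.erase_insert (fun h => hfb (Finset.mem_of_mem_erase h)),
      Finset.insert_erase heb]
  have hbback : M.IsBase ((insert e (b₁.erase f) : Finset α) : Set α) := by
    rw [hkey]; exact hb
  have s2 : SymExchStepNotTypeB M b {b₁, X, Q} {insert e (b₁.erase f), P, Q} :=
    step_mk M b hb₁base hX hQ hfb₁ hfX heX heb₁ hbback hP (Or.inr (Or.inr hQb))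
  rw [hkey] at s2
  rw [tri23 b X Y]
  refine Relation.ReflTransGen.head s1 ?_
  rw [tri23 b₁ Q X]
  exact Relation.ReflTransGen.head s2 Relation.ReflTransGen.refl

/-- Case `e ∉ b`, `f ∉ b`, with `2 ≤ |Y \ b|`: three steps through `b`. -/
lemma caseB (hb : M.IsBase (b : Set α))
    (hMbB : ∀ B : Set α, Mb.IsBase B ↔ M.IsBase B ∧ B ≠ (b : Set α))
    (hX : M.IsBase (X : Set α)) (hY : M.IsBase (Y : Set α))
    (heX : e ∈ X) (heY : e ∉ Y) (hfY : f ∈ Y) (hfX : f ∉ X)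
    (hP : M.IsBase ((insert f (X.erase e) : Finset α) : Set α))
    (hQ : M.IsBase ((insert e (Y.erase f) : Finset α) : Set α))
    (hPb : insert f (X.erase e) ≠ b)
    (heb : e ∉ b) (hfb : f ∉ b) (hYcard : 2 ≤ (Y \ b).card) :
    Relation.ReflTransGen (SymExchStepNotTypeB M b) {b, X, Y}
      {b, insert f (X.erase e), insert e (Y.erase f)} := by
  have hef : e ≠ f := fun h => hfX (h ▸ heX)
  set P := insert f (X.erase e) with hPdef
  set Q := insert e (Y.erase f) with hQdef
  obtain ⟨y, hyb, hyY, hYs⟩ := exchange_fin M hY hb hfY hfb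
  set Ys := insert y (Y.erase f) with hYsdef
  set b₁ := insert f (b.erase y) with hb₁def
  set b₂ := insert e (b.erase y) with hb₂def
  have hb₁base : M.IsBase (b₁ : Set α) := relax_base M Mb hb hMbB hY hyb hyY hY hfY hfb
  have hb₂base : M.IsBase (b₂ : Set α) := relax_base M Mb hb hMbB hY hyb hyY hX heX heb
  have hYsne : Ys ≠ b := by
    obtain ⟨g, hg, hgf⟩ := Finset.exists_mem_ne (s := Y \ b) (by omega) f
    rw [Finset.mem_sdiff] at hg
    intro h
    apply hg.2
    rw [← h, hYsdef]
    exact Finset.mem_insert_of_mem (Finset.mem_erase.mpr ⟨hgf, hg.1⟩)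
  have s1 : SymExchStepNotTypeB M b {b, Y, X} {b₁, Ys, X} :=
    step_mk M b hb hY hX hyb hyY hfY hfb hb₁base hYs (Or.inl rfl)
  -- step 2
  have hfb₁ : f ∈ b₁ := Finset.mem_insert_self _ _
  have heb₁ : e ∉ b₁ := by
    simp only [hb₁def, Finset.mem_insert, Finset.mem_erase]
    rintro (h | ⟨-, h⟩)
    · exact hef h
    · exact heb h
  have hkey2 : insert e (b₁.erase f) = b₂ := by
    rw [hb₁def, Finset.erase_insert (fun h => hfb (Finset.mem_of_mem_erase h)), hb₂def]
  have hb₂base' : M.IsBase ((insert e (b₁.erase f) : Finset α) : Set α) := by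
    rw [hkey2]; exact hb₂base
  have s2 : SymExchStepNotTypeB M b {b₁, X, Ys} {insert e (b₁.erase f), P, Ys} :=
    step_mk M b hb₁base hX hYs hfb₁ hfX heX heb₁ hb₂base' hP (Or.inr (Or.inr hYsne))
  rw [hkey2] at s2
  -- step 3
  have heb₂ : e ∈ b₂ := Finset.mem_insert_self _ _
  have heYs : e ∉ Ys := by
    simp only [hYsdef, Finset.mem_insert, Finset.mem_erase]
    rintro (h | ⟨-, h⟩)
    · exact heb (h ▸ hyb)
    · exact heY h
  have hyYs : y ∈ Ys := Finset.mem_insert_self _ _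
  have hyb₂ : y ∉ b₂ := by
    simp only [hb₂def, Finset.mem_insert, Finset.mem_erase]
    rintro (h | ⟨h, -⟩)
    · exact heb (h ▸ hyb)
    · exact h rfl
  have hkey3 : insert y (b₂.erase e) = b := by
    rw [hb₂def, Finset.erase_insert (fun h => heb (Finset.mem_of_mem_erase h)),
      Finset.insert_erase hyb]
  have hbback : M.IsBase ((insert y (b₂.erase e) : Finset α) : Set α) := by
    rw [hkey3]; exact hb
  have hkey4 : insert e (Ys.erase y) = Q := by
    rw [hYsdef, Finset.erase_insert (fun h => hyY (Finset.mem_of_mem_erase h)), hQdef]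
  have hQ' : M.IsBase ((insert e (Ys.erase y) : Finset α) : Set α) := by
    rw [hkey4]; exact hQ
  have s3 : SymExchStepNotTypeB M b {b₂, Ys, P} {insert y (b₂.erase e), insert e (Ys.erase y), P} :=
    step_mk M b hb₂base hYs hP heb₂ heYs hyYs hyb₂ hbback hQ' (Or.inr (Or.inr hPb))
  rw [hkey3, hkey4] at s3
  -- assemble
  rw [tri23 b X Y]
  refine Relation.ReflTransGen.head s1 ?_
  rw [tri23 b₁ Ys X]
  refine Relation.ReflTransGen.head s2 ?_
  rw [tri23 b₂ P Ys]
  refine Relation.ReflTransGen.head s3 ?_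
  rw [tri23 b Q P]

/-- Case `e ∈ b`, `f ∈ b`, with `2 ≤ |Y \ b|`: three steps through `b`. -/
lemma caseC (hb : M.IsBase (b : Set α))
    (hMbB : ∀ B : Set α, Mb.IsBase B ↔ M.IsBase B ∧ B ≠ (b : Set α))
    (hX : M.IsBase (X : Set α)) (hY : M.IsBase (Y : Set α))
    (heX : e ∈ X) (heY : e ∉ Y) (hfY : f ∈ Y) (hfX : f ∉ X)
    (hP : M.IsBase ((insert f (X.erase e) : Finset α) : Set α))
    (hQ : M.IsBase ((insert e (Y.erase f) : Finset α) : Set α))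
    (hPb : insert f (X.erase e) ≠ b)
    (heb : e ∈ b) (hfb : f ∈ b) (hYcard : 2 ≤ (Y \ b).card) :
    Relation.ReflTransGen (SymExchStepNotTypeB M b) {b, X, Y}
      {b, insert f (X.erase e), insert e (Y.erase f)} := by
  have hef : e ≠ f := fun h => hfX (h ▸ heX)
  set P := insert f (X.erase e) with hPdef
  set Q := insert e (Y.erase f) with hQdef
  -- find v ∈ Y \ b with Y - v + e a base
  have hKg : M.Indep ((insert e (Y ∩ b) : Finset α) : Set α) := by
    apply hb.indep.subset
    exact_mod_cast Finset.coe_subset.mpr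
      (Finset.insert_subset heb (Finset.inter_subset_right))
  obtain ⟨v, hvY, hvYb, hY1⟩ := exchange_into M hY heY Finset.inter_subset_left hKg
  have hvb : v ∉ b := fun h => hvYb (Finset.mem_inter.mpr ⟨hvY, h⟩)
  have hve : v ≠ e := fun h => heY (h ▸ hvY)
  have hvf : v ≠ f := fun h => hvb (h ▸ hfb)
  set Y1 := insert e (Y.erase v) with hY1def
  set b₁ := insert v (b.erase e) with hb₁def
  set b₂ := insert v (b.erase f) with hb₂def
  have hb₁base : M.IsBase (b₁ : Set α) := relax_base M Mb hb hMbB hY heb heY hY hvY hvb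
  have hb₂base : M.IsBase (b₂ : Set α) := relax_base M Mb hb hMbB hX hfb hfX hY hvY hvb
  have hY1ne : Y1 ≠ b := by
    obtain ⟨g, hg, hgv⟩ := Finset.exists_mem_ne (s := Y \ b) (by omega) v
    rw [Finset.mem_sdiff] at hg
    intro h
    apply hg.2
    rw [← h, hY1def]
    exact Finset.mem_insert_of_mem (Finset.mem_erase.mpr ⟨hgv, hg.1⟩)
  have s1 : SymExchStepNotTypeB M b {b, Y, X} {b₁, Y1, X} :=
    step_mk M b hb hY hX heb heY hvY hvb hb₁base hY1 (Or.inl rfl)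
  -- step 2
  have hfb₁ : f ∈ b₁ :=
    Finset.mem_insert_of_mem (Finset.mem_erase.mpr ⟨hef.symm, hfb⟩)
  have heb₁ : e ∉ b₁ := by
    simp only [hb₁def, Finset.mem_insert, Finset.mem_erase]
    rintro (h | ⟨h, -⟩)
    · exact hve h.symm
    · exact h rfl
  have hkey2 : insert e (b₁.erase f) = b₂ := by
    rw [hb₁def, Finset.erase_insert_of_ne hvf, erase_comm' b e f,
      Finset.insert_comm, Finset.insert_erase (Finset.mem_erase.mpr ⟨hef, heb⟩), hb₂def]
  have hb₂base' : M.IsBase ((insert e (b₁.erase f) : Finset α) : Set α) := by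
    rw [hkey2]; exact hb₂base
  have s2 : SymExchStepNotTypeB M b {b₁, X, Y1} {insert e (b₁.erase f), P, Y1} :=
    step_mk M b hb₁base hX hY1 hfb₁ hfX heX heb₁ hb₂base' hP (Or.inr (Or.inr hY1ne))
  rw [hkey2] at s2
  -- step 3
  have hvb₂ : v ∈ b₂ := Finset.mem_insert_self _ _
  have hvY1 : v ∉ Y1 := by
    simp only [hY1def, Finset.mem_insert, Finset.mem_erase]
    rintro (h | ⟨h, -⟩)
    · exact hve h
    · exact h rfl
  have hfY1 : f ∈ Y1 :=
    Finset.mem_insert_of_mem (Finset.mem_erase.mpr ⟨fun h => hvf h.symm, hfY⟩)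
  have hfb₂ : f ∉ b₂ := by
    simp only [hb₂def, Finset.mem_insert, Finset.mem_erase]
    rintro (h | ⟨h, -⟩)
    · exact hvf h.symm
    · exact h rfl
  have hkey3 : insert f (b₂.erase v) = b := by
    rw [hb₂def, Finset.erase_insert (fun h => hvb (Finset.mem_of_mem_erase h)),
      Finset.insert_erase hfb]
  have hbback : M.IsBase ((insert f (b₂.erase v) : Finset α) : Set α) := by
    rw [hkey3]; exact hb
  have hkey4 : insert v (Y1.erase f) = Q := by
    rw [hY1def, Finset.erase_insert_of_ne hef, erase_comm' Y v f,
      Finset.insert_comm, Finset.insert_erase (Finset.mem_erase.mpr ⟨hvf, hvY⟩), hQdef]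
  have hQ' : M.IsBase ((insert v (Y1.erase f) : Finset α) : Set α) := by
    rw [hkey4]; exact hQ
  have s3 : SymExchStepNotTypeB M b {b₂, Y1, P} {insert f (b₂.erase v), insert v (Y1.erase f), P} :=
    step_mk M b hb₂base hY1 hP hvb₂ hvY1 hfY1 hfb₂ hbback hQ' (Or.inr (Or.inr hPb))
  rw [hkey3, hkey4] at s3
  rw [tri23 b X Y]
  refine Relation.ReflTransGen.head s1 ?_
  rw [tri23 b₁ Y1 X]
  refine Relation.ReflTransGen.head s2 ?_
  rw [tri23 b₂ P Y1]
  refine Relation.ReflTransGen.head s3 ?_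
  rw [tri23 b Q P]

lemma main_lemma (M Mb : Matroid α) (b : Finset α) (hb : M.IsBase (b : Set α))
    (hMbB : ∀ B : Set α, Mb.IsBase B ↔ M.IsBase B ∧ B ≠ (b : Set α))
    (X Y : Finset α) (e f : α)
    (hX : M.IsBase (X : Set α)) (hY : M.IsBase (Y : Set α))
    (heX : e ∈ X) (heY : e ∉ Y) (hfY : f ∈ Y) (hfX : f ∉ X)
    (hP : M.IsBase ((insert f (X.erase e) : Finset α) : Set α))
    (hQ : M.IsBase ((insert e (Y.erase f) : Finset α) : Set α))
    (hPb : insert f (X.erase e) ≠ b) (hQb : insert e (Y.erase f) ≠ b)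
    (hcard : 2 ≤ (X \ b).card ∨ 2 ≤ (Y \ b).card) :
    Relation.ReflTransGen (SymExchStepNotTypeB M b) {b, X, Y}
      {b, insert f (X.erase e), insert e (Y.erase f)} := by
  by_cases heb : e ∈ b <;> by_cases hfb : f ∈ b
  · -- e ∈ b, f ∈ b
    rcases hcard with hc | hc
    · rw [tri23 b X Y, tri23 b (insert f (X.erase e)) (insert e (Y.erase f))]
      exact caseC hb hMbB hY hX hfY hfX heX heY hQ hP hQb hfb heb hc
    · exact caseC hb hMbB hX hY heX heY hfY hfX hP hQ hPb heb hfb hc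
  · -- e ∈ b, f ∉ b
    exact caseA hb hMbB hX hY heX heY hfY hfX hP hQ hQb heb hfb
  · -- e ∉ b, f ∈ b
    rw [tri23 b X Y, tri23 b (insert f (X.erase e)) (insert e (Y.erase f))]
    exact caseA hb hMbB hY hX hfY hfX heX heY hQ hP hPb hfb heb
  · -- e ∉ b, f ∉ b
    rcases hcard with hc | hc
    · rw [tri23 b X Y, tri23 b (insert f (X.erase e)) (insert e (Y.erase f))]
      exact caseB hb hMbB hY hX hfY hfX heX heY hQ hP hQb hfb heb hc
    · exact caseB hb hMbB hX hY heX heY hfY hfX hP hQ hPb heb hfb hc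

end helpers

/-- Suppose the bases of `Mb` are exactly the bases of `M` other than `b`. Let
`B₁, B₂, B₁', B₂'` be bases of `M` distinct from `b` with `{B₁', B₂'}` obtained
from `{B₁, B₂}` by one symmetric exchange step in `M`, and suppose
`b + B₁ + B₂ = C₁ + C₂ + C₃` as element multisets for some bases `C₁, C₂, C₃` of
`M` distinct from `b`. Then `{b, B₁', B₂'}` is obtained from `{b, B₁, B₂}` by a
finite sequence of symmetric exchange steps in `M`, none of which is of type `b`. -/
theorem stmt6 [DecidableEq α] (M Mb : Matroid α) (hE : M.E.Finite)
    (b : Finset α) (hb : M.IsBase (b : Set α))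
    (hMbE : Mb.E = M.E)
    (hMbB : ∀ B : Set α, Mb.IsBase B ↔ M.IsBase B ∧ B ≠ (b : Set α))
    (B₁ B₂ B₁' B₂' : Finset α)
    (h₁ : M.IsBase (B₁ : Set α)) (h₂ : M.IsBase (B₂ : Set α))
    (h₁' : M.IsBase (B₁' : Set α)) (h₂' : M.IsBase (B₂' : Set α))
    (hne₁ : B₁ ≠ b) (hne₂ : B₂ ≠ b) (hne₁' : B₁' ≠ b) (hne₂' : B₂' ≠ b)
    (hstep : SymExchStep M {B₁, B₂} {B₁', B₂'})
    (hC : ∃ C₁ C₂ C₃ : Finset α,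
      M.IsBase (C₁ : Set α) ∧ M.IsBase (C₂ : Set α) ∧ M.IsBase (C₃ : Set α) ∧
      C₁ ≠ b ∧ C₂ ≠ b ∧ C₃ ≠ b ∧
      b.val + B₁.val + B₂.val = C₁.val + C₂.val + C₃.val) :
    Relation.ReflTransGen (SymExchStepNotTypeB M b) {b, B₁, B₂} {b, B₁', B₂'} := by
  obtain ⟨S₀, Xx, Yy, e, f, hS₀, hXxB, hYyB, he, hf, hPbase, hQbase, hS, hT⟩ := hstep
  have hS₀0 : S₀ = 0 := by
    have hcards := congrArg Multiset.card hS
    simp only [Multiset.insert_eq_cons, Multiset.card_cons, Multiset.card_singleton] at hcards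
    rw [← Multiset.card_eq_zero]
    omega
  subst hS₀0
  have hXxmem : Xx = B₁ ∨ Xx = B₂ := by
    have : Xx ∈ ({B₁, B₂} : Multiset (Finset α)) := by
      rw [hS]; exact Multiset.mem_cons_self _ _
    simpa using this
  have hYymem : Yy = B₁ ∨ Yy = B₂ := by
    have : Yy ∈ ({B₁, B₂} : Multiset (Finset α)) := by
      rw [hS]; exact Multiset.mem_cons_of_mem (Multiset.mem_cons_self _ _)
    simpa using this
  have hXxb : Xx ≠ b := by rcases hXxmem with rfl | rfl <;> assumption
  have hYyb : Yy ≠ b := by rcases hYymem with rfl | rfl <;> assumption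
  have hPmem : insert f (Xx.erase e) = B₁' ∨ insert f (Xx.erase e) = B₂' := by
    have : insert f (Xx.erase e) ∈ ({B₁', B₂'} : Multiset (Finset α)) := by
      rw [hT]; exact Multiset.mem_cons_self _ _
    simpa using this
  have hQmem : insert e (Yy.erase f) = B₁' ∨ insert e (Yy.erase f) = B₂' := by
    have : insert e (Yy.erase f) ∈ ({B₁', B₂'} : Multiset (Finset α)) := by
      rw [hT]; exact Multiset.mem_cons_of_mem (Multiset.mem_cons_self _ _)
    simpa using this
  have hPb : insert f (Xx.erase e) ≠ b := by rcases hPmem with h | h <;> rw [h] <;> assumption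
  have hQb : insert e (Yy.erase f) ≠ b := by rcases hQmem with h | h <;> rw [h] <;> assumption
  have hsum : B₁.val + B₂.val = Xx.val + Yy.val := by
    have := congrArg (fun s : Multiset (Finset α) => (s.map Finset.val).sum) hS
    simpa using this
  have hC' : ∃ C₁ C₂ C₃ : Finset α,
      M.IsBase (C₁ : Set α) ∧ M.IsBase (C₂ : Set α) ∧ M.IsBase (C₃ : Set α) ∧
      C₁ ≠ b ∧ C₂ ≠ b ∧ C₃ ≠ b ∧
      b.val + Xx.val + Yy.val = C₁.val + C₂.val + C₃.val := by
    obtain ⟨C₁, C₂, C₃, h1, h2, h3, h4, h5, h6, h7⟩ := hC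
    exact ⟨C₁, C₂, C₃, h1, h2, h3, h4, h5, h6, by rw [add_assoc, ← hsum, ← add_assoc]; exact h7⟩
  have hcard := count_lemma M hb hC'
  have hgoal1 : ({b, B₁, B₂} : Multiset (Finset α)) = {b, Xx, Yy} := congrArg (b ::ₘ ·) hS
  have hgoal2 : ({b, B₁', B₂'} : Multiset (Finset α)) =
      {b, insert f (Xx.erase e), insert e (Yy.erase f)} := congrArg (b ::ₘ ·) hT
  rw [hgoal1, hgoal2]
  have hem := Finset.mem_sdiff.mp he
  have hfm := Finset.mem_sdiff.mp hf
  exact main_lemma M Mb b hb hMbB Xx Yy e f hXxB hYyB hem.1 hem.2 hfm.1 hfm.2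
    hPbase hQbase hPb hQb hcard
end

section
/- Let M be a matroid of rank r on a finite ground set E and let b be a basis of M. For a basis B of M let v_B ∈ ℝ^E denote its 0/1 indicator vector. Then the convex hull of {v_B : B a basis of M, B ≠ b} equals the intersection of the convex hull of {v_B : B a basis of M} with the half space {x ∈ ℝ^E : ∑_{i∈b} x(i) ≤ r − 1}. -/
open Matroid Set

lemma symExchange {α : Type*} {M : Matroid α} {B₁ B₂ : Set α} (h₁ : M.IsBase B₁) (h₂ : M.IsBase B₂)
    (hfin : B₂.Finite) {e : α} (he : e ∈ B₁ \ B₂) :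
    ∃ f ∈ B₂ \ B₁, M.IsBase (insert f (B₁ \ {e})) ∧ M.IsBase (insert e (B₂ \ {f})) := by
  have heE : e ∈ M.E := h₁.subset_ground he.1
  have hI1 : M.Indep (B₁ \ {e}) := h₁.indep.subset diff_subset
  have hI1E : B₁ \ {e} ⊆ M.E := hI1.subset_ground
  set S : Set α := {f ∈ B₂ | M.Indep (insert e (B₂ \ {f}))} with hS
  have hclS : e ∈ M.closure S := by
    have key : ∀ T : Set α, T.Finite → T ⊆ B₂ \ S → e ∈ M.closure (B₂ \ T) := by
      intro T hT
      refine Set.Finite.induction_on (motive := fun T _ => T ⊆ B₂ \ S → e ∈ M.closure (B₂ \ T)) T hT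
        ?_ ?_
      · intro _; rw [diff_empty, h₂.closure_eq]; exact heE
      · intro f T hfT hTfin IH hsub
        have hf : f ∈ B₂ \ S := hsub (mem_insert _ _)
        have hfS : e ∈ M.closure (B₂ \ {f}) := by
          by_contra hcon
          have hind := ((h₂.indep.subset diff_subset).notMem_closure_iff_of_notMem
            (fun h => he.2 h.1) heE).mp hcon
          exact hf.2 ⟨hf.1, hind⟩
        have hT : e ∈ M.closure (B₂ \ T) := IH (fun x hx => hsub (mem_insert_of_mem _ hx))
        have hun : M.Indep ((B₂ \ T) ∪ (B₂ \ {f})) :=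
          h₂.indep.subset (union_subset diff_subset diff_subset)
        have hcl := hun.closure_inter_eq_inter_closure
        rw [show B₂ \ insert f T = B₂ \ T ∩ (B₂ \ {f}) by ext x; simp; tauto, hcl]
        exact ⟨hT, hfS⟩
    have := key (B₂ \ S) (hfin.subset diff_subset) Subset.rfl
    rwa [diff_diff_cancel_left (fun x hx => hx.1)] at this
  have hemem : e ∉ M.closure (B₁ \ {e}) := by
    rw [hI1.notMem_closure_iff_of_notMem (fun h => h.2 rfl) heE,
      insert_diff_singleton, insert_eq_of_mem he.1]
    exact h₁.indep
  obtain ⟨f, hfS, hfcl⟩ : ∃ f ∈ S, f ∉ M.closure (B₁ \ {e}) := by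
    by_contra hcon
    push_neg at hcon
    have : M.closure S ⊆ M.closure (B₁ \ {e}) := by
      have h1 : S ⊆ M.closure (B₁ \ {e}) := hcon
      have := M.closure_subset_closure h1
      rwa [M.closure_closure] at this
    exact hemem (this hclS)
  have hfB₂ : f ∈ B₂ := hfS.1
  have hfne : f ≠ e := fun h => he.2 (h ▸ hfB₂)
  have hfB₁ : f ∉ B₁ := fun h => hfcl (M.subset_closure _ hI1E ⟨h, hfne⟩)
  have hind1 : M.Indep (insert f (B₁ \ {e})) := by
    rw [hI1.insert_indep_iff_of_notMem (fun h => hfB₁ h.1)]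
    exact ⟨h₂.subset_ground hfB₂, hfcl⟩
  exact ⟨f, ⟨hfB₂, hfB₁⟩, h₁.exchange_isBase_of_indep hfB₁ hind1,
    h₂.exchange_isBase_of_indep he.2 hfS.2⟩

/-- Let `M` be a matroid of rank `r` on a finite ground set (all bases have `r`
elements) and let `b` be a basis. The convex hull of the indicator vectors of
the bases different from `b` equals the intersection of the convex hull of the
indicator vectors of all bases with the half space `∑_{i ∈ b} x i ≤ r - 1`. -/
theorem stmt8 {α : Type*} [Fintype α] [DecidableEq α] (M : Matroid α) (r : ℕ)
    (hr : ∀ B : Finset α, M.IsBase (B : Set α) → B.card = r)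
    (b : Finset α) (hb : M.IsBase (b : Set α)) :
    convexHull ℝ {x : α → ℝ | ∃ B : Finset α, M.IsBase (B : Set α) ∧ B ≠ b ∧
        x = fun i => if i ∈ B then 1 else 0}
      = (convexHull ℝ {x : α → ℝ | ∃ B : Finset α, M.IsBase (B : Set α) ∧
            x = fun i => if i ∈ B then 1 else 0})
        ∩ {x : α → ℝ | ∑ i ∈ b, x i ≤ (r : ℝ) - 1} := by
  classical
  set vB : Finset α → (α → ℝ) := fun B i => if i ∈ B then 1 else 0 with hvB
  have hsum : ∀ B : Finset α, ∑ i ∈ b, vB B i = ((b ∩ B).card : ℝ) := by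
    intro B
    simp [vB, Finset.sum_ite_mem]
  have hcard : ∀ B : Finset α, M.IsBase (B : Set α) → B ≠ b → ((b ∩ B).card : ℝ) ≤ (r : ℝ) - 1 := by
    intro B hB hBb
    have h1 : (b ∩ B).card ≤ B.card := Finset.card_le_card (Finset.inter_subset_right)
    have h2 : (b ∩ B).card ≠ B.card := by
      intro h
      have : b ∩ B = B := Finset.eq_of_subset_of_card_le Finset.inter_subset_right h.ge
      have hsub : (B : Set α) ⊆ (b : Set α) := by
        intro x hx
        have : x ∈ b ∩ B := this.symm ▸ hx
        exact_mod_cast (Finset.mem_inter.mp (by exact_mod_cast this)).1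
      have := hB.eq_of_subset_isBase hb hsub
      exact hBb (by exact_mod_cast Finset.coe_injective this)
    have h3 : (b ∩ B).card + 1 ≤ r := by
      have h5 := lt_of_le_of_ne h1 h2
      have h6 := hr B hB
      omega
    have h4 : ((b ∩ B).card : ℝ) + 1 ≤ (r : ℝ) := by exact_mod_cast h3
    linarith
  apply Set.Subset.antisymm
  · apply Set.subset_inter
    · refine convexHull_mono ?_
      rintro x ⟨B, h1, _, h3⟩
      exact ⟨B, h1, h3⟩
    · apply convexHull_min
      · rintro x ⟨B, hB, hBne, rfl⟩
        show ∑ i ∈ b, vB B i ≤ (r : ℝ) - 1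
        rw [hsum B]
        exact hcard B hB hBne
      · exact convex_halfSpace_le
          ⟨fun x y => Finset.sum_add_distrib, fun c x => by simp [Finset.mul_sum]⟩ _
  · rintro x ⟨hx, hxle⟩
    -- convert hull membership into weights
    set bs : Finset (Finset α) := Finset.univ.filter (fun B : Finset α => M.IsBase (B : Set α))
      with hbs
    have hinj : Function.Injective vB := by
      intro B B' h
      ext i
      have h2 := congrFun h i
      by_cases hi : i ∈ B <;> by_cases hi' : i ∈ B' <;>
        simp [vB, hi, hi'] at h2 <;> simp [hi, hi']
    have hset : {y : α → ℝ | ∃ B : Finset α, M.IsBase (B : Set α) ∧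
        y = fun i => if i ∈ B then 1 else 0} = ↑(bs.image vB) := by
      ext y
      simp only [Set.mem_setOf_eq, Finset.coe_image, Set.mem_image, Finset.mem_coe,
        Finset.mem_filter, Finset.mem_univ, true_and, hbs]
      constructor
      · rintro ⟨B, h1, h2⟩; exact ⟨B, h1, h2.symm⟩
      · rintro ⟨B, h1, h2⟩; exact ⟨B, h1, h2.symm⟩
    rw [hset, Finset.convexHull_eq] at hx
    obtain ⟨w0, hw00, hw01, hw02⟩ := hx
    rw [Finset.centerMass_eq_of_sum_1 _ _ hw01] at hw02
    -- the set of admissible weight functions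
    set K : Set (Finset α → ℝ) := {w | (∀ B, 0 ≤ w B) ∧ (∀ B : Finset α, ¬ M.IsBase (B : Set α) → w B = 0) ∧
        (∑ B : Finset α, w B) = 1 ∧ (∀ i, ∑ B : Finset α, w B * vB B i = x i)} with hK
    have hKne : K.Nonempty := by
      refine ⟨fun B => if B ∈ bs then w0 (vB B) else 0, ?_, ?_, ?_, ?_⟩
      · intro B
        by_cases h : B ∈ bs
        · simp only [h, if_true]
          exact hw00 _ (Finset.mem_image_of_mem _ h)
        · simp [h]
      · intro B hB
        have : B ∉ bs := by simp [hbs, hB]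
        simp [this]
      · rw [Finset.sum_ite_mem, Finset.univ_inter, ← Finset.sum_image (fun B _ B' _ h => hinj h)]
        exact hw01
      · intro i
        have h2 := congrFun hw02 i
        rw [Finset.sum_apply] at h2
        simp only [Pi.smul_apply, id_eq, smul_eq_mul] at h2
        rw [Finset.sum_image (fun B _ B' _ h => hinj h)] at h2
        simpa only [ite_mul, zero_mul, Finset.sum_ite_mem, Finset.univ_inter] using h2
    have hKcl : IsClosed K := by
      have : K = (⋂ B : Finset α, {w : Finset α → ℝ | 0 ≤ w B}) ∩
          ((⋂ B ∈ {B : Finset α | ¬ M.IsBase (B : Set α)}, {w : Finset α → ℝ | w B = 0}) ∩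
           ({w : Finset α → ℝ | ∑ B : Finset α, w B = 1} ∩
            ⋂ i : α, {w : Finset α → ℝ | ∑ B : Finset α, w B * vB B i = x i})) := by
        ext w
        simp only [hK, Set.mem_setOf_eq, Set.mem_inter_iff, Set.mem_iInter]
      rw [this]
      refine IsClosed.inter (isClosed_iInter fun B => ?_) (IsClosed.inter
        (isClosed_iInter fun B => isClosed_iInter fun _ => ?_) (IsClosed.inter ?_
        (isClosed_iInter fun i => ?_)))
      · exact isClosed_Ici.preimage (continuous_apply B)
      · exact isClosed_eq (continuous_apply B) continuous_const
      · exact isClosed_eq (continuous_finset_sum _ fun B _ => continuous_apply B) continuous_const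
      · exact isClosed_eq (continuous_finset_sum _ fun B _ =>
          (continuous_apply B).mul continuous_const) continuous_const
    have hKsub : K ⊆ Set.Icc (0 : Finset α → ℝ) 1 := by
      intro w hw
      refine ⟨fun B => hw.1 B, fun B => ?_⟩
      calc w B ≤ ∑ B' : Finset α, w B' :=
            Finset.single_le_sum (fun B' _ => hw.1 B') (Finset.mem_univ B)
        _ = 1 := hw.2.2.1
    have hKco : IsCompact K := IsCompact.of_isClosed_subset isCompact_Icc hKcl hKsub
    obtain ⟨w, hwK, hwmin⟩ := hKco.exists_isMinOn hKne (continuous_apply b).continuousOn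
    -- the minimiser puts no weight on b
    have hwb : w b = 0 := by
      by_contra hwb0
      have hwbpos : 0 < w b := lt_of_le_of_ne (hwK.1 b) (Ne.symm hwb0)
      have hF : ∑ B : Finset α, w B * ((b ∩ B).card : ℝ) = ∑ i ∈ b, x i := by
        calc ∑ B : Finset α, w B * ((b ∩ B).card : ℝ)
            = ∑ B : Finset α, ∑ i ∈ b, w B * vB B i := by
              refine Finset.sum_congr rfl fun B _ => ?_
              rw [← Finset.mul_sum, hsum B]
          _ = ∑ i ∈ b, ∑ B : Finset α, w B * vB B i := Finset.sum_comm
          _ = ∑ i ∈ b, x i := Finset.sum_congr rfl fun i _ => hwK.2.2.2 i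
      by_cases hcase : ∃ B' : Finset α, w B' ≠ 0 ∧ B' ≠ b ∧ 2 ≤ (b \ B').card
      · -- exchange case: contradict minimality
        obtain ⟨B', hwB', hB'b, hcard2⟩ := hcase
        have hB'base : M.IsBase (B' : Set α) := by
          by_contra h; exact hwB' (hwK.2.1 B' h)
        obtain ⟨e, he⟩ : (b \ B').Nonempty := Finset.card_pos.mp (by omega)
        have heb : e ∈ b := (Finset.mem_sdiff.mp he).1
        have heB' : e ∉ B' := (Finset.mem_sdiff.mp he).2
        obtain ⟨f, hf, hbase1, hbase2⟩ := symExchange hb hB'base (B'.finite_toSet)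
          (e := e) ⟨by exact_mod_cast heb, by exact_mod_cast heB'⟩
        have hfB' : f ∈ B' := by exact_mod_cast hf.1
        have hfb : f ∉ b := fun h => hf.2 (by exact_mod_cast h)
        have hfe : f ≠ e := fun h => hfb (h ▸ heb)
        set B₁ : Finset α := insert f (b.erase e) with hB₁
        set B₂ : Finset α := insert e (B'.erase f) with hB₂
        have hB₁c : (B₁ : Set α) = insert f ((b : Set α) \ {e}) := by
          rw [hB₁]; push_cast
          rfl
        have hB₂c : (B₂ : Set α) = insert e ((B' : Set α) \ {f}) := by
          rw [hB₂]; push_cast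
          rfl
        have hB₁base : M.IsBase (B₁ : Set α) := by rw [hB₁c]; exact hbase1
        have hB₂base : M.IsBase (B₂ : Set α) := by rw [hB₂c]; exact hbase2
        obtain ⟨g, hg⟩ : ((b \ B').erase e).Nonempty := by
          rw [← Finset.card_pos, Finset.card_erase_of_mem he]; omega
        have hge' : g ≠ e := (Finset.mem_erase.mp hg).1
        have hgb : g ∈ b := (Finset.mem_sdiff.mp (Finset.mem_of_mem_erase hg)).1
        have hgB' : g ∉ B' := (Finset.mem_sdiff.mp (Finset.mem_of_mem_erase hg)).2
        have hbB₁ : b ≠ B₁ := fun h => hfb (h ▸ Finset.mem_insert_self f _)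
        have hbB₂ : b ≠ B₂ := by
          intro h
          have hgm : g ∈ B₂ := h ▸ hgb
          rcases Finset.mem_insert.mp hgm with h' | h'
          · exact hge' h'
          · exact hgB' (Finset.mem_of_mem_erase h')
        have hB'B₁ : B' ≠ B₁ := by
          intro h
          have hgm : g ∈ B₁ := Finset.mem_insert_of_mem (Finset.mem_erase.mpr ⟨hge', hgb⟩)
          rw [← h] at hgm
          exact hgB' hgm
        have hB'B₂ : B' ≠ B₂ := fun h => heB' (h ▸ Finset.mem_insert_self e _)
        set μ := min (w b) (w B') with hμ
        have hμpos : 0 < μ := lt_min hwbpos (lt_of_le_of_ne (hwK.1 B') (Ne.symm hwB'))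
        have hμb : μ ≤ w b := min_le_left _ _
        have hμB' : μ ≤ w B' := min_le_right _ _
        set d : Finset α → Finset α → ℝ := fun X B => if B = X then 1 else 0 with hd
        set w' : Finset α → ℝ :=
          fun B => w B + μ * (d B₁ B + d B₂ B - d b B - d B' B) with hw'
        have hkey : ∀ i, vB b i + vB B' i = vB B₁ i + vB B₂ i := by
          intro i
          by_cases hie : i = e
          · subst hie
            simp [vB, hB₁, hB₂, heb, heB', Ne.symm hfe]
          · by_cases hif : i = f
            · subst hif
              simp [vB, hB₁, hB₂, hfb, hfB', hfe]
            · simp [vB, hB₁, hB₂, hie, hif]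
        have hdsum : ∀ X : Finset α, ∑ B : Finset α, d X B = 1 := by
          intro X; simp [hd]
        have hw'K : w' ∈ K := by
          refine ⟨?_, ?_, ?_, ?_⟩
          · intro B
            by_cases h1 : B = b
            · have hsimp : w' B = w B - μ := by
                simp [hw', hd, h1, hbB₁, hbB₂, Ne.symm hB'b]
                ring
              rw [hsimp, h1]; linarith
            · by_cases h2 : B = B'
              · have hsimp : w' B = w B - μ := by
                  simp [hw', hd, h2, hB'B₁, hB'B₂, hB'b]
                  ring
                rw [hsimp, h2]; linarith
              · have hnn := hwK.1 B
                simp only [hw', hd, if_neg h1, if_neg h2]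
                split_ifs <;> linarith [hμpos.le]
          · intro B hB
            have h1 : B ≠ b := fun h => hB (by rw [h]; exact hb)
            have h2 : B ≠ B' := fun h => hB (by rw [h]; exact hB'base)
            have h3 : B ≠ B₁ := fun h => hB (by rw [h]; exact hB₁base)
            have h4 : B ≠ B₂ := fun h => hB (by rw [h]; exact hB₂base)
            simp [hw', hd, h1, h2, h3, h4, hwK.2.1 B hB]
          · simp only [hw']
            rw [Finset.sum_add_distrib, hwK.2.2.1, ← Finset.mul_sum]
            have hz : ∑ B : Finset α, (d B₁ B + d B₂ B - d b B - d B' B) = 0 := by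
              simp only [Finset.sum_sub_distrib, Finset.sum_add_distrib, hdsum]; ring
            rw [hz]; ring
          · intro i
            have hdv : ∀ X : Finset α, ∑ B : Finset α, d X B * vB B i = vB X i := by
              intro X
              simp [hd, ite_mul]
            have hstep : ∑ B : Finset α, w' B * vB B i
                = ∑ B : Finset α, w B * vB B i + μ * ∑ B : Finset α,
                  (d B₁ B * vB B i + d B₂ B * vB B i - d b B * vB B i - d B' B * vB B i) := by
              rw [Finset.mul_sum, ← Finset.sum_add_distrib]
              refine Finset.sum_congr rfl fun B _ => ?_
              simp only [hw']
              ring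
            rw [hstep, hwK.2.2.2 i]
            have hz : ∑ B : Finset α,
                (d B₁ B * vB B i + d B₂ B * vB B i - d b B * vB B i - d B' B * vB B i)
                = vB B₁ i + vB B₂ i - vB b i - vB B' i := by
              simp only [Finset.sum_sub_distrib, Finset.sum_add_distrib, hdv]
            rw [hz, show vB B₁ i + vB B₂ i - vB b i - vB B' i = 0 from by linarith [hkey i],
              mul_zero, add_zero]
        have hle : w b ≤ w' b := hwmin hw'K
        have hw'b : w' b = w b - μ := by
          simp [hw', hd, hbB₁, hbB₂, Ne.symm hB'b]
          ring
        rw [hw'b] at hle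
        linarith
      · -- near-b case: contradict the halfspace bound
        push_neg at hcase
        have hbound : ∀ B ∈ Finset.univ.erase b,
            w B * ((r : ℝ) - 1) ≤ w B * ((b ∩ B).card : ℝ) := by
          intro B hB
          have hBb : B ≠ b := Finset.ne_of_mem_erase hB
          by_cases hw0 : w B = 0
          · simp [hw0]
          · have h1 : (b \ B).card ≤ 1 := by
              have := hcase B hw0 hBb; omega
            have h2 : (b ∩ B).card + (b \ B).card = b.card := Finset.card_inter_add_card_sdiff b B
            have h3 : b.card = r := hr b hb
            have h5 : ((r : ℝ) - 1) ≤ ((b ∩ B).card : ℝ) := by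
              have h4 : r ≤ (b ∩ B).card + 1 := by omega
              have h6 := (Nat.cast_le (α := ℝ)).mpr h4
              push_cast at h6
              linarith
            exact mul_le_mul_of_nonneg_left h5 (hwK.1 B)
        have hsplit : w b * ((b ∩ b).card : ℝ)
            + ∑ B ∈ Finset.univ.erase b, w B * ((b ∩ B).card : ℝ) = ∑ i ∈ b, x i := by
          exact (Finset.add_sum_erase Finset.univ
            (fun B => w B * ((b ∩ B).card : ℝ)) (Finset.mem_univ b)).trans hF
        have hbb : ((b ∩ b).card : ℝ) = (r : ℝ) := by
          rw [Finset.inter_self]; exact_mod_cast hr b hb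
        have hwsum : ∑ B ∈ Finset.univ.erase b, w B = 1 - w b := by
          have h7 := hwK.2.2.1
          rw [← Finset.add_sum_erase Finset.univ w (Finset.mem_univ b)] at h7
          linarith
        have hge : (1 - w b) * ((r : ℝ) - 1)
            ≤ ∑ B ∈ Finset.univ.erase b, w B * ((b ∩ B).card : ℝ) := by
          calc (1 - w b) * ((r : ℝ) - 1)
              = ∑ B ∈ Finset.univ.erase b, w B * ((r : ℝ) - 1) := by
                rw [← Finset.sum_mul, hwsum]
            _ ≤ _ := Finset.sum_le_sum hbound
        have hxb : ∑ i ∈ b, x i ≤ (r : ℝ) - 1 := hxle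
        rw [hbb] at hsplit
        nlinarith
    -- conclude
    set t : Finset (Finset α) := Finset.univ.filter (fun B => w B ≠ 0) with ht
    have hbt : b ∉ t := by simp [ht, hwb]
    have hsumt : ∑ B ∈ t, w B = 1 := by
      rw [ht, Finset.sum_filter_ne_zero]
      exact hwK.2.2.1
    have hx' : t.centerMass w vB = x := by
      rw [Finset.centerMass_eq_of_sum_1 _ _ hsumt]
      funext i
      rw [Finset.sum_apply]
      have hxi := hwK.2.2.2 i
      rw [← hxi, ht]
      simp only [Pi.smul_apply, smul_eq_mul]
      exact Finset.sum_filter_of_ne (fun B _ h h0 => h (by rw [h0, zero_mul]))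
    have hmem := Finset.centerMass_mem_convexHull t (w := w) (z := vB)
      (fun B _ => hwK.1 B) (by rw [hsumt]; norm_num)
      (s := {y : α → ℝ | ∃ B : Finset α, M.IsBase (B : Set α) ∧ B ≠ b ∧
        y = fun i => if i ∈ B then 1 else 0}) ?_
    · exact hx' ▸ hmem
    · intro B hBt
      have hwB : w B ≠ 0 := (Finset.mem_filter.mp hBt).2
      have hBbase : M.IsBase (B : Set α) := by
        by_contra h
        exact hwB (hwK.2.1 B h)
      have hBb : B ≠ b := fun h => hbt (h ▸ hBt)
      exact ⟨B, hBbase, hBb, rfl⟩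
end

section
/- Let M be a sparse paving matroid of rank r on a finite ground set E, and let S be any collection of r-element subsets of E none of which is a basis of M. Then the collection of all r-element subsets of E not belonging to S is the collection of bases of a matroid on E. -/
open Matroid

variable {α : Type*}

/-- A circuit of `M` is a minimal dependent set. -/
def IsCircuit (M : Matroid α) (C : Set α) : Prop :=
  M.Dep C ∧ ∀ D ⊂ C, M.Indep D

/-- A hyperplane of `M` is a maximal proper flat. -/
def IsHyperplane (M : Matroid α) (H : Set α) : Prop :=
  M.IsFlat H ∧ H ≠ M.E ∧ ∀ F, M.IsFlat F → H ⊂ F → F = M.E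

/-- A matroid `M` of rank `r` is sparse paving if every `r`-element subset of the
ground set is either a basis or is both a circuit and a hyperplane. -/
def SparsePaving (M : Matroid α) (r : ℕ) : Prop :=
  ∀ S : Finset α, (S : Set α) ⊆ M.E → S.card = r →
    M.IsBase (S : Set α) ∨ (_root_.IsCircuit M (S : Set α) ∧ _root_.IsHyperplane M (S : Set α))

/-- Two sets of the form `insert x A`, `insert y A` with `x ≠ y`, `A` independent,
the first dependent and the second a flat, cannot both exist. -/
lemma key_lemma (M : Matroid α) {A : Set α} {x y : α} (hA : M.Indep A)
    (hx : M.Dep (insert x A)) (hY : M.IsFlat (insert y A)) (hxy : x ≠ y) : False := by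
  have hxcl : x ∈ M.closure A := by
    have := hA.insert_dep_iff.mp hx
    exact this.1
  have hsub : M.closure A ⊆ insert y A := by
    rw [← hY.closure]
    exact M.closure_subset_closure (Set.subset_insert _ _)
  have hxA : x ∉ A := (hA.insert_dep_iff.mp hx).2
  rcases hsub hxcl with h | h
  · exact hxy h
  · exact hxA h

/-- Let `M` be a sparse paving matroid of rank `r` on a finite ground set and
let `S` be any collection of `r`-element subsets of the ground set, none of
which is a basis of `M`. Then the `r`-element subsets of the ground set not
belonging to `S` form the collection of bases of a matroid. -/
theorem stmt12 (M : Matroid α) (hE : M.E.Finite) (r : ℕ)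
    (hr : ∀ B, M.IsBase B → B.ncard = r)
    (hsp : SparsePaving M r)
    (S : Set (Finset α))
    (hS : ∀ T ∈ S, (T : Set α) ⊆ M.E ∧ T.card = r ∧ ¬ M.IsBase (T : Set α)) :
    ∃ N : Matroid α, N.E = M.E ∧
      ∀ B : Set α, N.IsBase B ↔
        ∃ T : Finset α, (T : Set α) = B ∧ (T : Set α) ⊆ M.E ∧ T.card = r ∧ T ∉ S := by
  classical
  set Base' : Set α → Prop := fun B =>
    ∃ T : Finset α, (T : Set α) = B ∧ (T : Set α) ⊆ M.E ∧ T.card = r ∧ T ∉ S with hBase'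
  -- there is a base
  have exists_base : ∃ B, Base' B := by
    obtain ⟨B, hB⟩ := M.exists_isBase
    have hBfin : B.Finite := hE.subset hB.subset_ground
    refine ⟨B, hBfin.toFinset, hBfin.coe_toFinset, ?_, ?_, ?_⟩
    · rw [hBfin.coe_toFinset]; exact hB.subset_ground
    · rw [← hr B hB, Set.ncard_eq_toFinset_card B hBfin]
    · intro hmem
      have := (hS _ hmem).2.2
      rw [Set.Finite.coe_toFinset] at this
      exact this hB
  have subset_ground : ∀ B, Base' B → B ⊆ M.E := by
    rintro B ⟨T, rfl, hTE, -, -⟩; exact hTE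
  -- exchange property
  have exch : Matroid.ExchangeProperty Base' := by
    rintro X Y ⟨TX, rfl, hTXE, hTXc, hTXS⟩ ⟨TY, rfl, hTYE, hTYc, hTYS⟩ a ha
    have haX : a ∈ TX := by exact_mod_cast ha.1
    have haY : a ∉ TY := by simpa using ha.2
    have hr1 : 1 ≤ r := by
      rw [← hTXc]; exact Finset.card_pos.mpr ⟨a, haX⟩
    -- for b ∈ E \ (TX.erase a), the candidate finset
    have hcard : ∀ b : α, b ∉ TX.erase a → (insert b (TX.erase a)).card = r := by
      intro b hb
      rw [Finset.card_insert_of_notMem hb, Finset.card_erase_of_mem haX, hTXc]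
      omega
    -- if the candidate is not a `Base'`, then it is a circuit-hyperplane of M
    have hch : ∀ b : α, b ∈ M.E → b ∉ TX.erase a →
        ¬ Base' (insert b ((TX : Set α) \ {a})) →
        _root_.IsCircuit M (insert b ((TX : Set α) \ {a})) ∧
          _root_.IsHyperplane M (insert b ((TX : Set α) \ {a})) := by
      intro b hbE hb hnb
      have hcoe : ((insert b (TX.erase a) : Finset α) : Set α)
          = insert b ((TX : Set α) \ {a}) := by
        push_cast [Finset.coe_erase]; rfl
      have hsubE : ((insert b (TX.erase a) : Finset α) : Set α) ⊆ M.E := by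
        rw [hcoe]
        refine Set.insert_subset hbE ?_
        exact (Set.diff_subset).trans hTXE
      have hmem : insert b (TX.erase a) ∈ S := by
        by_contra hnot
        exact hnb ⟨insert b (TX.erase a), hcoe, hsubE, hcard b hb, hnot⟩
      have hnbase := (hS _ hmem).2.2
      rcases hsp (insert b (TX.erase a)) hsubE (hcard b hb) with h | h
      · exact absurd h hnbase
      · rwa [hcoe] at h
    by_contra hcon
    push_neg at hcon
    -- |TY \ TX| = |TX \ TY| ≥ 1
    have hsd : (TX \ TY).card = (TY \ TX).card := Finset.card_sdiff_comm (by rw [hTXc, hTYc])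
    have haXY : a ∈ TX \ TY := Finset.mem_sdiff.mpr ⟨haX, haY⟩
    have hpos : 0 < (TY \ TX).card := by
      rw [← hsd]; exact Finset.card_pos.mpr ⟨a, haXY⟩
    rcases eq_or_lt_of_le (show 1 ≤ (TY \ TX).card from hpos) with h1 | h1
    · -- |TY \ TX| = 1 : then the exchange set is Y itself
      obtain ⟨b, hb⟩ := Finset.card_eq_one.mp h1.symm
      have hTXTY : TX \ TY = {a} := by
        obtain ⟨c, hc⟩ := Finset.card_eq_one.mp (by rw [hsd, ← h1])
        rw [hc] at haXY ⊢
        rw [Finset.mem_singleton.mp haXY]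
      have hbY : b ∈ TY ∧ b ∉ TX := by
        have : b ∈ TY \ TX := by rw [hb]; exact Finset.mem_singleton_self b
        exact ⟨(Finset.mem_sdiff.mp this).1, (Finset.mem_sdiff.mp this).2⟩
      have heq : insert b ((TX : Set α) \ {a}) = (TY : Set α) := by
        ext x
        simp only [Set.mem_insert_iff, Set.mem_diff, Set.mem_singleton_iff, Finset.mem_coe]
        constructor
        · rintro (rfl | ⟨hx, hxa⟩)
          · exact hbY.1
          · by_contra hxY
            have : x ∈ TX \ TY := Finset.mem_sdiff.mpr ⟨hx, hxY⟩
            rw [hTXTY] at this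
            exact hxa (by simpa using this)
        · intro hx
          by_cases hxX : x ∈ TX
          · exact Or.inr ⟨hxX, fun h => haY (h ▸ hx)⟩
          · left
            have : x ∈ TY \ TX := Finset.mem_sdiff.mpr ⟨hx, hxX⟩
            rw [hb] at this; simpa using this
      refine hcon b ?_ ?_
      · exact ⟨by exact_mod_cast hbY.1, by simpa using hbY.2⟩
      · rw [heq]; exact ⟨TY, rfl, hTYE, hTYc, hTYS⟩
    · -- |TY \ TX| ≥ 2 : two distinct candidates, both circuit-hyperplanes → contradiction
      obtain ⟨b, hbmem, b', hb'mem, hbb'⟩ := Finset.one_lt_card.mp h1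
      have hbY := Finset.mem_sdiff.mp hbmem
      have hb'Y := Finset.mem_sdiff.mp hb'mem
      have hbe : b ∉ TX.erase a := fun h => hbY.2 (Finset.mem_of_mem_erase h)
      have hb'e : b' ∉ TX.erase a := fun h => hb'Y.2 (Finset.mem_of_mem_erase h)
      have hbne : (b : α) ∈ (TY : Set α) \ (TX : Set α) := by
        exact ⟨by exact_mod_cast hbY.1, by simpa using hbY.2⟩
      have hb'ne : (b' : α) ∈ (TY : Set α) \ (TX : Set α) := by
        exact ⟨by exact_mod_cast hb'Y.1, by simpa using hb'Y.2⟩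
      have hch1 := hch b (hTYE hbne.1) hbe (hcon b hbne)
      have hch2 := hch b' (hTYE hb'ne.1) hb'e (hcon b' hb'ne)
      -- A = ↑TX \ {a} is independent, insert b A is dependent, insert b' A is a flat
      have hbA : b ∉ (TX : Set α) \ {a} := fun h => hbY.2 (by exact_mod_cast h.1)
      have hA : M.Indep ((TX : Set α) \ {a}) := by
        refine hch1.1.2 _ ?_
        exact (Set.ssubset_insert hbA)
      exact key_lemma M hA hch1.1.1 hch2.2.1 hbb'
  refine ⟨Matroid.ofIsBaseOfFinite hE Base' exists_base exch subset_ground, rfl, fun B => ?_⟩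
  rw [Matroid.ofIsBaseOfFinite_isBase]
end

section
/- Let M be a matroid on a finite ground set E and let b be a basis of M such that the collection B(M) \ {b} is the collection of bases of a matroid on E. Let x₁, x₂ be two distinct elements of b and let y₁, y₂ be two distinct elements of E \ b. If (b \ {x₁}) ∪ {y₁} and (b \ {x₂}) ∪ {y₂} are bases of M, then (b \ {x₁}) ∪ {y₂} and (b \ {x₂}) ∪ {y₁} are bases of M. -/
open Matroid

variable {α : Type*}

private lemma auxKey (M N : Matroid α) (b : Set α)
    (hNB : ∀ B : Set α, N.IsBase B ↔ M.IsBase B ∧ B ≠ b)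
    (x₁ x₂ : α) (hx₁ : x₁ ∈ b) (hx : x₁ ≠ x₂)
    (y₁ y₂ : α) (hy₁ : y₁ ∉ b) (hy₂ : y₂ ∉ b) (hy : y₁ ≠ y₂)
    (h₁ : M.IsBase (insert y₁ (b \ {x₁}))) (h₂ : M.IsBase (insert y₂ (b \ {x₂}))) :
    M.IsBase (insert y₂ (b \ {x₁})) := by
  have hb₁ : N.IsBase (insert y₁ (b \ {x₁})) := by
    rw [hNB]
    refine ⟨h₁, fun h => hy₁ ?_⟩
    rw [← h]; exact Set.mem_insert _ _
  have hb₂ : N.IsBase (insert y₂ (b \ {x₂})) := by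
    rw [hNB]
    refine ⟨h₂, fun h => hy₂ ?_⟩
    rw [← h]; exact Set.mem_insert _ _
  have hmem : y₁ ∈ insert y₁ (b \ {x₁}) \ insert y₂ (b \ {x₂}) := by
    constructor
    · exact Set.mem_insert _ _
    · intro h
      rcases h with h | h
      · exact hy h
      · exact hy₁ h.1
  obtain ⟨f, hf, hfb⟩ := hb₁.exchange hb₂ hmem
  have hd : insert y₁ (b \ {x₁}) \ {y₁} = b \ {x₁} := by
    rw [Set.insert_diff_self_of_notMem]
    intro h; exact hy₁ h.1
  rw [hd] at hfb
  -- f ∈ b₂ \ b₁, so f = y₂ or f = x₁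
  have hfcase : f = y₂ ∨ f = x₁ := by
    obtain ⟨hfm, hfn⟩ := hf
    rcases hfm with h | h
    · exact Or.inl h
    · right
      by_contra hne
      exact hfn (Set.mem_insert_of_mem _ ⟨h.1, hne⟩)
  rcases hfcase with h | h <;> rw [h] at hfb
  · exact ((hNB _).mp hfb).1
  · exfalso
    have : insert x₁ (b \ {x₁}) = b := Set.insert_diff_singleton.trans (Set.insert_eq_self.mpr hx₁)
    rw [this] at hfb
    exact ((hNB _).mp hfb).2 rfl

/-- Let `b` be a basis of `M` such that the bases of `M` other than `b` form the
collection of bases of a matroid. If `x₁ ≠ x₂` are in `b`, `y₁ ≠ y₂` are in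
`E \ b`, and `(b \ {x₁}) ∪ {y₁}` and `(b \ {x₂}) ∪ {y₂}` are bases of `M`, then
`(b \ {x₁}) ∪ {y₂}` and `(b \ {x₂}) ∪ {y₁}` are bases of `M`. -/
theorem stmt15 (M : Matroid α) (hE : M.E.Finite)
    (b : Set α) (hb : M.IsBase b)
    (hMb : ∃ N : Matroid α, N.E = M.E ∧ ∀ B : Set α, N.IsBase B ↔ M.IsBase B ∧ B ≠ b)
    (x₁ x₂ : α) (hx₁ : x₁ ∈ b) (hx₂ : x₂ ∈ b) (hx : x₁ ≠ x₂)
    (y₁ y₂ : α) (hy₁ : y₁ ∈ M.E \ b) (hy₂ : y₂ ∈ M.E \ b) (hy : y₁ ≠ y₂)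
    (h₁ : M.IsBase (insert y₁ (b \ {x₁}))) (h₂ : M.IsBase (insert y₂ (b \ {x₂}))) :
    M.IsBase (insert y₂ (b \ {x₁})) ∧ M.IsBase (insert y₁ (b \ {x₂})) := by
  obtain ⟨N, -, hNB⟩ := hMb
  exact ⟨auxKey M N b hNB x₁ x₂ hx₁ hx y₁ y₂ hy₁.2 hy₂.2 hy h₁ h₂,
    auxKey M N b hNB x₂ x₁ hx₂ hx.symm y₂ y₁ hy₂.2 hy₁.2 hy.symm h₂ h₁⟩
end

section
/- Let M be a matroid on a nonempty finite ground set E having no loops and no coloops, and let b be a basis of M such that the collection B(M) \ {b} is the collection of bases of a matroid on E. Then for every y ∈ E \ b, the set b ∪ {y} is a circuit of M. -/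
open Matroid Set

variable {α : Type*}

/-- Let `M` be a matroid on a nonempty finite ground set without loops (every
element lies in some basis) and without coloops (every element is outside some
basis), and let `b` be a basis of `M` such that the bases of `M` other than `b`
form the collection of bases of a matroid. Then for every `y ∈ E \ b`, the set
`b ∪ {y}` is a circuit of `M`: it is contained in no basis, but every proper
subset of it is contained in some basis. -/
theorem stmt16 (M : Matroid α) (hE : M.E.Finite) (hEne : M.E.Nonempty)
    (hloop : ∀ e ∈ M.E, ∃ B, M.IsBase B ∧ e ∈ B)
    (hcoloop : ∀ e ∈ M.E, ∃ B, M.IsBase B ∧ e ∉ B)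
    (b : Set α) (hb : M.IsBase b)
    (hMb : ∃ N : Matroid α, N.E = M.E ∧ ∀ B : Set α, N.IsBase B ↔ M.IsBase B ∧ B ≠ b) :
    ∀ y ∈ M.E \ b,
      (¬ ∃ B, M.IsBase B ∧ insert y b ⊆ B) ∧
      (∀ D ⊂ insert y b, ∃ B, M.IsBase B ∧ D ⊆ B) := by
  obtain ⟨N, hNE, hNbase⟩ := hMb
  rintro y ⟨hyE, hyb⟩
  constructor
  · rintro ⟨B, hB, hyB⟩
    have hbB : b = B := hb.eq_of_subset_isBase hB ((subset_insert y b).trans hyB)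
    exact hyb (hbB ▸ hyB (mem_insert y b))
  · intro D hD
    by_cases hyD : y ∈ D
    · -- D misses some x ∈ b
      obtain ⟨x, hxyb, hxD⟩ := exists_of_ssubset hD
      have hxb : x ∈ b := by
        rcases hxyb with rfl | h
        · exact absurd hyD hxD
        · exact h
      have hxy : x ≠ y := fun h => hyb (h ▸ hxb)
      -- Suffices: insert y (b \ {x}) is independent
      have hkey : M.Indep (insert y (b \ {x})) := by
        by_contra hdep
        -- b \ {x} is N-independent
        have hbfin : b.Finite := hE.subset hb.subset_ground
        obtain ⟨B0, hB0, hxB0⟩ := hcoloop x (hb.subset_ground hxb)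
        obtain ⟨w, ⟨hwB0, hwb⟩, hw⟩ := hb.exchange_mem hB0 hxb hxB0
        have hNw : N.IsBase (insert w (b \ {x})) := by
          rw [hNbase]
          exact ⟨hw, fun h => hwb (h ▸ mem_insert w _)⟩
        have hNI : N.Indep (b \ {x}) := hNw.indep.subset (subset_insert w _)
        -- get an M-base J ⊆ insert y b with y ∈ J
        have hyind : M.Indep {y} := by
          obtain ⟨B1, hB1, hyB1⟩ := hloop y hyE
          exact hB1.indep.subset (Set.singleton_subset_iff.2 hyB1)
        have hsub : insert y b ⊆ M.E := Set.insert_subset hyE hb.subset_ground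
        obtain ⟨J, hJ, hyJ⟩ := hyind.subset_isBasis_of_subset
          (Set.singleton_subset_iff.2 (mem_insert y b)) hsub
        have hJbase : M.IsBase J := hb.isBase_of_isBasis_superset (subset_insert y b) hJ
        have hJne : J ≠ b := fun h => hyb (h ▸ hyJ rfl)
        have hNJ : N.Indep J := by
          have : N.IsBase J := (hNbase J).mpr ⟨hJbase, hJne⟩
          exact this.indep
        -- cardinalities
        have hcard : (b \ {x}).encard < J.encard := by
          have h1 : J.encard = b.encard := hJbase.encard_eq_encard_of_isBase hb
          rw [h1]
          exact (hbfin.subset Set.diff_subset).encard_lt_encard (Set.sdiff_singleton_ssubset.2 hxb)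
        obtain ⟨e, ⟨heJ, heb⟩, hein⟩ := hNI.augment hNJ hcard
        -- e ∈ {x, y}
        have heJyb : e ∈ insert y b := hJ.subset heJ
        have hexy : e = y ∨ e = x := by
          rcases heJyb with rfl | h
          · exact Or.inl rfl
          · right
            by_contra hex
            exact heb ⟨h, hex⟩
        rcases hexy with rfl | he'
        · -- insert y (b \ {x}) is N-indep, hence M-indep; contradiction
          obtain ⟨BN, hBN, hsubBN⟩ := hein.exists_isBase_superset
          have hMBN : M.IsBase BN := ((hNbase BN).mp hBN).1
          exact hdep (hMBN.indep.subset hsubBN)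
        · -- b is N-indep: contradiction
          rw [he'] at hein
          have : insert x (b \ {x}) = b := Set.insert_diff_singleton.trans
            (Set.insert_eq_self.2 hxb)
          rw [this] at hein
          obtain ⟨BN, hBN, hsubBN⟩ := hein.exists_isBase_superset
          obtain ⟨hMBN, hBNne⟩ := (hNbase BN).mp hBN
          exact hBNne (hb.eq_of_subset_isBase hMBN hsubBN).symm
      obtain ⟨B, hB, hsubB⟩ := hkey.exists_isBase_superset
      refine ⟨B, hB, fun d hdD => hsubB ?_⟩
      have hd : d ∈ insert y b := hD.subset hdD
      rcases hd with rfl | hdb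
      · exact mem_insert d _
      · refine Set.mem_insert_of_mem _ ⟨hdb, fun h => ?_⟩
        rw [Set.mem_singleton_iff] at h
        exact hxD (h ▸ hdD)
    · -- D ⊆ b
      refine ⟨b, hb, fun d hdD => ?_⟩
      rcases hD.subset hdD with rfl | h
      · exact absurd hdD hyD
      · exact h
end
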